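/- Let t be a term and R a TRS such that all reductions of t with the parallel-innermost rewrite relation ⇉ are finite. Then Dh(t, ⇉) ≤ max { Σ_{1 ≤ i ≤ k} Dh(⊥(t|πi), ⇉) | ⟨π1,…,πk⟩ ∈ MSDC(t) }, where ⊥(t|πi) denotes a maximal parallel argument normal form of the subterm t|πi. -/

import Mathlib

namespace ParallelComplexity

/-! ## First-order terms -/

inductive Term (σ : Type) (V : Type) : Type where
  | var : V → Term σ V
  | fn : σ → List (Term σ V) → Term σ V

variable {σ V : Type}

mutual
  /-- Application of a substitution to a term. -/
  def Term.subst (θ : V → Term σ V) : Term σ V → Term σ V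
    | Term.var x => θ x
    | Term.fn f ts => Term.fn f (Term.substList θ ts)
  def Term.substList (θ : V → Term σ V) : List (Term σ V) → List (Term σ V)
    | [] => []
    | t :: ts => Term.subst θ t :: Term.substList θ ts
end

mutual
  /-- The size |t| of a term. -/
  def Term.size : Term σ V → ℕ
    | Term.var _ => 1
    | Term.fn _ ts => 1 + Term.sizeList ts
  def Term.sizeList : List (Term σ V) → ℕ
    | [] => 0
    | t :: ts => Term.size t + Term.sizeList ts
end

/-- Subterm `t|π` at a position (positions are lists of argument indices);
`none` if the position is not a position of `t`. -/
def Term.subtermAt : Term σ V → List ℕ → Option (Term σ V)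
  | t, [] => some t
  | Term.var _, _ :: _ => none
  | Term.fn _ ts, i :: π =>
    match ts[i]? with
    | none => none
    | some u => Term.subtermAt u π

/-- `t[s]π`: replacement of the subterm at position `π` by `s`. -/
def Term.replaceAt : Term σ V → List ℕ → Term σ V → Option (Term σ V)
  | _, [], s => some s
  | Term.var _, _ :: _, _ => none
  | Term.fn f ts, i :: π, s =>
    match ts[i]? with
    | none => none
    | some u =>
      match Term.replaceAt u π s with
      | none => none
      | some u' => some (Term.fn f (ts.set i u'))

def Term.isVar (t : Term σ V) : Prop := ∃ x, t = Term.var x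

/-- `x` occurs as a variable in the term. -/
inductive Term.VarIn (x : V) : Term σ V → Prop
  | var : Term.VarIn x (Term.var x)
  | fn {f : σ} {ts : List (Term σ V)} {t : Term σ V} :
      t ∈ ts → Term.VarIn x t → Term.VarIn x (Term.fn f ts)

/-! ## Term rewrite systems -/

structure Rule (σ V : Type) where
  lhs : Term σ V
  rhs : Term σ V

/-- A well-formed TRS: a finite set of rules `ℓ → r` with `ℓ ∉ V` and
`Var(r) ⊆ Var(ℓ)`. -/
def IsWfTRS (R : Set (Rule σ V)) : Prop :=
  R.Finite ∧ (∀ r ∈ R, ¬ r.lhs.isVar) ∧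
    ∀ r ∈ R, ∀ x : V, Term.VarIn x r.rhs → Term.VarIn x r.lhs

def IsRedex (R : Set (Rule σ V)) (t : Term σ V) : Prop :=
  ∃ r ∈ R, ∃ θ : V → Term σ V, t = Term.subst θ r.lhs

/-- An innermost redex: a redex none of whose proper subterms is a redex. -/
def IsInnermostRedex (R : Set (Rule σ V)) (t : Term σ V) : Prop :=
  IsRedex R t ∧
    ∀ π : List ℕ, π ≠ [] → ∀ u, t.subtermAt π = some u → ¬ IsRedex R u

/-- One rewrite step at position `π`. -/
def RewriteAt (R : Set (Rule σ V)) (π : List ℕ) (s t : Term σ V) : Prop :=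
  ∃ r ∈ R, ∃ θ : V → Term σ V,
    s.subtermAt π = some (Term.subst θ r.lhs) ∧
    s.replaceAt π (Term.subst θ r.rhs) = some t

/-- The rewrite relation `s →_R t`. -/
def Rewrite (R : Set (Rule σ V)) (s t : Term σ V) : Prop := ∃ π, RewriteAt R π s t

/-- The innermost rewrite relation `s →i t`. -/
def InnermostRewrite (R : Set (Rule σ V)) (s t : Term σ V) : Prop :=
  ∃ π, ∃ r ∈ R, ∃ θ : V → Term σ V,
    s.subtermAt π = some (Term.subst θ r.lhs) ∧
    IsInnermostRedex R (Term.subst θ r.lhs) ∧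
    s.replaceAt π (Term.subst θ r.rhs) = some t

def NormalForm (R : Set (Rule σ V)) (t : Term σ V) : Prop := ¬ ∃ u, Rewrite R t u

/-- Parallel-innermost rewriting `s ⇉ t`: `s →i⁺ t` and either
(a) `s` is an innermost redex and `s →i t`, or (b) `s = f(s₁,…,sₙ)`,
`t = f(t₁,…,tₙ)` and each `sₖ ⇉ tₖ` or `sₖ = tₖ` is a normal form. -/
inductive ParInnermost (R : Set (Rule σ V)) : Term σ V → Term σ V → Prop
  | redex {s t : Term σ V} :
      Relation.TransGen (InnermostRewrite R) s t →
      IsInnermostRedex R s → InnermostRewrite R s t → ParInnermost R s t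
  | congr (f : σ) (ss ts : List (Term σ V)) :
      Relation.TransGen (InnermostRewrite R) (Term.fn f ss) (Term.fn f ts) →
      ss.length = ts.length →
      -- each `sₖ ⇉ tₖ`, or `sₖ = tₖ` is a normal form (stated as the
      -- classically equivalent implication to satisfy the kernel's
      -- restrictions on nested inductive occurrences)
      (∀ p ∈ ss.zip ts, ¬ (p.1 = p.2 ∧ NormalForm R p.1) → ParInnermost R p.1 p.2) →
      ParInnermost R (Term.fn f ss) (Term.fn f ts)

/-! ## Abstract properties of relations -/

def Confluent {α : Type} (r : α → α → Prop) : Prop :=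
  ∀ s t u, Relation.ReflTransGen r s t → Relation.ReflTransGen r s u →
    ∃ v, Relation.ReflTransGen r t v ∧ Relation.ReflTransGen r u v

def Deterministic {α : Type} (r : α → α → Prop) : Prop :=
  ∀ s t u, r s t → r s u → t = u

def UniformlyConfluent {α : Type} (r : α → α → Prop) : Prop :=
  ∀ s t u, r s t → r s u → t = u ∨ ∃ v, r t v ∧ r u v

/-! ## Derivation height and runtime complexity -/

/-- `e`-th iterate of a relation. -/
def iterRel {α : Type} (r : α → α → Prop) : ℕ → α → α → Prop
  | 0 => fun a b => a = b
  | n + 1 => fun a c => ∃ b, r a b ∧ iterRel r n b c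

/-- Derivation height `Dh(t, →) = sup { e | ∃ t'. t →^e t' } ∈ ℕ ∪ {ω}`. -/
noncomputable def Dh {α : Type} (r : α → α → Prop) (t : α) : ℕ∞ :=
  sSup { e : ℕ∞ | ∃ n : ℕ, e = (n : ℕ∞) ∧ ∃ t', iterRel r n t t' }

/-- Defined symbols: root symbols of left-hand sides. -/
def Defined (R : Set (Rule σ V)) (f : σ) : Prop :=
  ∃ r ∈ R, ∃ ts : List (Term σ V), r.lhs = Term.fn f ts

def HasDefinedRoot (R : Set (Rule σ V)) (t : Term σ V) : Prop :=
  ∃ f ts, t = Term.fn f ts ∧ Defined R f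

/-- Constructor terms: terms over constructor symbols and variables. -/
inductive ConsTerm (R : Set (Rule σ V)) : Term σ V → Prop
  | var (x : V) : ConsTerm R (Term.var x)
  | fn (f : σ) (ts : List (Term σ V)) :
      ¬ Defined R f → (∀ t ∈ ts, ConsTerm R t) → ConsTerm R (Term.fn f ts)

/-- Basic terms: a defined symbol applied to constructor terms. -/
def BasicTerm (R : Set (Rule σ V)) (t : Term σ V) : Prop :=
  ∃ f ts, t = Term.fn f ts ∧ Defined R f ∧ ∀ u ∈ ts, ConsTerm R u

/-- Innermost runtime complexity. -/
noncomputable def irc (R : Set (Rule σ V)) (n : ℕ) : ℕ∞ :=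
  sSup { d : ℕ∞ | ∃ t, BasicTerm R t ∧ t.size ≤ n ∧ d = Dh (InnermostRewrite R) t }

/-- Parallel-innermost runtime complexity. -/
noncomputable def pirc (R : Set (Rule σ V)) (n : ℕ) : ℕ∞ :=
  sSup { d : ℕ∞ | ∃ t, BasicTerm R t ∧ t.size ≤ n ∧ d = Dh (ParInnermost R) t }

/-! ## Critical pairs -/

def RuleVars (r : Rule σ V) : Set V :=
  { x | Term.VarIn x r.lhs ∨ Term.VarIn x r.rhs }

/-- `r₂` is a variant of `r₁` (each is a substitution instance of the other). -/
def IsVariantOf (r₁ r₂ : Rule σ V) : Prop :=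
  ∃ θ₁ θ₂ : V → Term σ V,
    r₂.lhs = Term.subst θ₁ r₁.lhs ∧ r₂.rhs = Term.subst θ₁ r₁.rhs ∧
    r₁.lhs = Term.subst θ₂ r₂.lhs ∧ r₁.rhs = Term.subst θ₂ r₂.rhs

def Unifies (θ : V → Term σ V) (s t : Term σ V) : Prop :=
  Term.subst θ s = Term.subst θ t

def IsMGU (μ : V → Term σ V) (s t : Term σ V) : Prop :=
  Unifies μ s t ∧
    ∀ δ : V → Term σ V, Unifies δ s t →
      ∃ δ' : V → Term σ V, ∀ x : V, Term.subst δ' (μ x) = δ x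

/-- Critical pairs `⟨uσ[rσ]π, vσ⟩` of a TRS, from variable-renamed copies
`ℓ → r` and `u → v` of rules of `R` overlapping at a non-variable position
`π` of `u` (not a root overlap of variants of the same rule). -/
def CriticalPair (R : Set (Rule σ V)) (cp : Term σ V × Term σ V) : Prop :=
  ∃ r₁ r₂ r₁' r₂' : Rule σ V, r₁' ∈ R ∧ r₂' ∈ R ∧
    IsVariantOf r₁' r₁ ∧ IsVariantOf r₂' r₂ ∧
    (∀ x : V, x ∈ RuleVars r₁ → x ∉ RuleVars r₂) ∧
    ∃ (π : List ℕ) (u' : Term σ V),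
      r₂.lhs.subtermAt π = some u' ∧ ¬ u'.isVar ∧
      (π = [] → ¬ IsVariantOf r₁ r₂) ∧
      ∃ μ : V → Term σ V, IsMGU μ r₁.lhs u' ∧
        ∃ w : Term σ V,
          (Term.subst μ r₂.lhs).replaceAt π (Term.subst μ r₁.rhs) = some w ∧
          cp = (w, Term.subst μ r₂.rhs)

/-- `R` is non-overlapping iff it has no critical pairs. -/
def NonOverlapping (R : Set (Rule σ V)) : Prop := ∀ cp, ¬ CriticalPair R cp

/-- An innermost critical overlay: a critical pair at the root position whose
critical peak consists of two innermost rewrite steps. -/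
def InnermostCriticalOverlay (R : Set (Rule σ V)) (cp : Term σ V × Term σ V) : Prop :=
  ∃ r₁ r₂ r₁' r₂' : Rule σ V, r₁' ∈ R ∧ r₂' ∈ R ∧
    IsVariantOf r₁' r₁ ∧ IsVariantOf r₂' r₂ ∧
    (∀ x : V, x ∈ RuleVars r₁ → x ∉ RuleVars r₂) ∧
    ¬ IsVariantOf r₁ r₂ ∧
    ∃ μ : V → Term σ V, IsMGU μ r₁.lhs r₂.lhs ∧
      IsInnermostRedex R (Term.subst μ r₂.lhs) ∧
      cp = (Term.subst μ r₁.rhs, Term.subst μ r₂.rhs)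

/-! ## Positions with defined symbols and structural dependency chains -/

/-- Strict prefix order on positions: `PosGT τ π` iff `τ > π`,
i.e. `∃ π' ≠ ε, π π' = τ`. -/
def PosGT (τ π : List ℕ) : Prop := ∃ π' : List ℕ, π' ≠ [] ∧ π ++ π' = τ

/-- `PosD(t)`: positions of `t` with defined root symbol. -/
def PosD (R : Set (Rule σ V)) (t : Term σ V) : Set (List ℕ) :=
  { π | ∃ u, t.subtermAt π = some u ∧ HasDefinedRoot R u }

/-- Structural dependency chain `⟨π₁,…,πₖ⟩` for `t`: positions in `PosD(t)`
with `π₁ > … > πₖ`. -/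
def SDChain (R : Set (Rule σ V)) (t : Term σ V) (c : List (List ℕ)) : Prop :=
  (∀ π ∈ c, π ∈ PosD R t) ∧ c.Chain' PosGT

/-- Maximal structural dependency chains: `MSDC R t c` iff `c` is a maximal
structural dependency chain for `t`. -/
def MSDC (R : Set (Rule σ V)) (t : Term σ V) (c : List (List ℕ)) : Prop :=
  SDChain R t c ∧
    ((c = [] ∧ PosD R t = ∅) ∨
      ∃ (π₁ : List ℕ) (rest : List (List ℕ)), c = π₁ :: rest ∧
        ∀ π ∈ PosD R t, ¬ PosGT π π₁ ∧ (PosGT π₁ π → π ∈ rest))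

/-! ## Sharp terms, dependency tuples -/

/-- Extended signature: base symbols, sharp symbols `f#`, compound symbols `Com_n`. -/
inductive SharpSym (σ : Type) : Type where
  | base : σ → SharpSym σ
  | sharp : σ → SharpSym σ
  | com : ℕ → SharpSym σ

mutual
  def Term.embed : Term σ V → Term (SharpSym σ) V
    | Term.var x => Term.var x
    | Term.fn f ts => Term.fn (SharpSym.base f) (Term.embedList ts)
  def Term.embedList : List (Term σ V) → List (Term (SharpSym σ) V)
    | [] => []
    | t :: ts => Term.embed t :: Term.embedList ts
end

open Classical in
/-- `t#`: mark the root of `t` with its sharp symbol (if defined). -/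
noncomputable def Term.sharp (R : Set (Rule σ V)) : Term σ V → Term (SharpSym σ) V
  | Term.var x => Term.var x
  | Term.fn f ts =>
    if Defined R f then Term.fn (SharpSym.sharp f) (Term.embedList ts)
    else Term.fn (SharpSym.base f) (Term.embedList ts)

open Classical in
/-- Sharping on terms over the extended signature: for `t = f(…)` with `f` a
defined (base) symbol of `R`, mark the root; otherwise `t# = t`. -/
noncomputable def sharpC (R : Set (Rule σ V)) : Term (SharpSym σ) V → Term (SharpSym σ) V
  | Term.fn (SharpSym.base f) ts =>
    if Defined R f then Term.fn (SharpSym.sharp f) ts else Term.fn (SharpSym.base f) ts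
  | t => t

def liftRule (r : Rule σ V) : Rule (SharpSym σ) V :=
  { lhs := r.lhs.embed, rhs := r.rhs.embed }

def liftRules (R : Set (Rule σ V)) : Set (Rule (SharpSym σ) V) := liftRule '' R

/-- The dependency tuple `ℓ# → Com_k(u₁#,…,uₖ#)` built from subterms `u₁,…,uₖ`
of the right-hand side. -/
noncomputable def mkDT (R : Set (Rule σ V)) (ρ : Rule σ V) (us : List (Term σ V)) :
    Rule (SharpSym σ) V :=
  { lhs := Term.sharp R ρ.lhs,
    rhs := Term.fn (SharpSym.com us.length) (us.map (Term.sharp R)) }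

/-- `DTpar(ℓ → r)`: one dependency tuple per maximal structural dependency chain. -/
def DTparRule (R : Set (Rule σ V)) (ρ : Rule σ V) : Set (Rule (SharpSym σ) V) :=
  { d | ∃ (c : List (List ℕ)) (us : List (Term σ V)),
      MSDC R ρ.rhs c ∧
      List.Forall₂ (fun π u => ρ.rhs.subtermAt π = some u) c us ∧
      d = mkDT R ρ us }

/-- `DTpar(R)`. -/
def DTparSet (R : Set (Rule σ V)) : Set (Rule (SharpSym σ) V) :=
  ⋃ ρ ∈ R, DTparRule R ρ

/-! ## Chain trees and Cplx -/

/-- A (possibly infinite, finitely branching) tree whose nodes (addressed by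
paths) are labelled with a dependency tuple and a substitution; the child at
direction `i` corresponds to argument `i` of the `Com` symbol. -/
structure ChainTree (σ V : Type) where
  label : List ℕ → Option (Rule (SharpSym σ) V × (V → Term (SharpSym σ) V))

/-- `T` is a `(D,R)`-chain tree for the sharp term `t`. -/
def IsChainTree (D R : Set (Rule (SharpSym σ) V)) (T : ChainTree σ V)
    (t : Term (SharpSym σ) V) : Prop :=
  (∃ r ν, T.label [] = some (r, ν) ∧ Term.subst ν r.lhs = t) ∧
  (∀ (p : List ℕ) (i : ℕ), T.label (p ++ [i]) ≠ none → T.label p ≠ none) ∧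
  (∀ (p : List ℕ) (r : Rule (SharpSym σ) V) (ν : V → Term (SharpSym σ) V),
    T.label p = some (r, ν) →
      r ∈ D ∧ NormalForm R (Term.subst ν r.lhs) ∧
      ∀ (i : ℕ) (r' : Rule (SharpSym σ) V) (δ : V → Term (SharpSym σ) V),
        T.label (p ++ [i]) = some (r', δ) →
          ∃ (m : ℕ) (vs : List (Term (SharpSym σ) V)),
            r.rhs = Term.fn (SharpSym.com m) vs ∧
            ∃ v, vs[i]? = some v ∧
              Relation.ReflTransGen (InnermostRewrite R)
                (Term.subst ν v) (Term.subst δ r'.lhs))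

/-- `|T|_S`: the number of nodes of `T` labelled with a DT from `S`. -/
noncomputable def treeCount (T : ChainTree σ V) (S : Set (Rule (SharpSym σ) V)) : ℕ∞ :=
  Set.encard { p : List ℕ | ∃ r ν, T.label p = some (r, ν) ∧ r ∈ S }

/-- `Cplx⟨D,S,R⟩(t)`: the supremum of `|T|_S` over all `(D,R)`-chain trees `T`
for `t` (`0` if there is no chain tree). -/
noncomputable def Cplx (D S R : Set (Rule (SharpSym σ) V))
    (t : Term (SharpSym σ) V) : ℕ∞ :=
  sSup { c : ℕ∞ | ∃ T : ChainTree σ V, IsChainTree D R T t ∧ c = treeCount T S }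

/-- `irc⟨D,S,R⟩(n)`: runtime complexity of a DT problem. -/
noncomputable def ircDTP (D S : Set (Rule (SharpSym σ) V)) (R : Set (Rule σ V))
    (n : ℕ) : ℕ∞ :=
  sSup { c : ℕ∞ | ∃ t : Term σ V, BasicTerm R t ∧ t.size ≤ n ∧
    c = Cplx D S (liftRules R) (Term.sharp R t) }

/-! ## Relative rewriting -/

/-- An innermost rewrite step using a rule from `X`, with innermost-ness
relative to the whole system `W`. -/
def InnermostRewriteSub (W X : Set (Rule σ V)) (s t : Term σ V) : Prop :=
  ∃ π, ∃ r ∈ X, ∃ θ : V → Term σ V,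
    s.subtermAt π = some (Term.subst θ r.lhs) ∧
    IsInnermostRedex W (Term.subst θ r.lhs) ∧
    s.replaceAt π (Term.subst θ r.rhs) = some t

/-- Innermost relative rewriting `→i_{A/B}`:
`s →B* s' →A s'' →B* t`, all steps innermost wrt `A ∪ B`. -/
def RelInnermost (A B : Set (Rule σ V)) (s t : Term σ V) : Prop :=
  ∃ s' s'' : Term σ V,
    Relation.ReflTransGen (InnermostRewriteSub (A ∪ B) B) s s' ∧
    InnermostRewriteSub (A ∪ B) A s' s'' ∧
    Relation.ReflTransGen (InnermostRewriteSub (A ∪ B) B) s'' t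

/-- Innermost runtime complexity of a relative TRS `A/B`. -/
noncomputable def ircRel (A B : Set (Rule σ V)) (n : ℕ) : ℕ∞ :=
  sSup { d : ℕ∞ | ∃ t : Term σ V, BasicTerm (A ∪ B) t ∧ t.size ≤ n ∧
    d = Dh (RelInnermost A B) t }

/-! ## Dependency tuples (abstract DT problems) -/

inductive IsBaseTerm : Term (SharpSym σ) V → Prop
  | var (x : V) : IsBaseTerm (Term.var x)
  | fn (f : σ) (ts : List (Term (SharpSym σ) V)) :
      (∀ t ∈ ts, IsBaseTerm t) → IsBaseTerm (Term.fn (SharpSym.base f) ts)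

def IsSharpTerm (t : Term (SharpSym σ) V) : Prop :=
  ∃ (f : σ) (args : List (Term (SharpSym σ) V)),
    t = Term.fn (SharpSym.sharp f) args ∧ ∀ a ∈ args, IsBaseTerm a

/-- A dependency tuple: a rule `s# → Com_n(t₁#,…,tₙ#)`. -/
def IsDT (r : Rule (SharpSym σ) V) : Prop :=
  IsSharpTerm r.lhs ∧
    ∃ (n : ℕ) (ts : List (Term (SharpSym σ) V)),
      r.rhs = Term.fn (SharpSym.com n) ts ∧ ts.length = n ∧ ∀ t ∈ ts, IsSharpTerm t

/-! ## Argument normal forms -/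

/-- Argument normal form: a variable, or a term all of whose direct arguments
are normal forms. -/
def ArgNF (R : Set (Rule σ V)) (t : Term σ V) : Prop :=
  (∃ x, t = Term.var x) ∨ ∃ f ts, t = Term.fn f ts ∧ ∀ u ∈ ts, NormalForm R u

/-- A parallel-innermost step all of whose rewrites are at positions strictly
below the root. -/
def ParInnermostBelow (R : Set (Rule σ V)) (s t : Term σ V) : Prop :=
  ParInnermost R s t ∧ ¬ IsInnermostRedex R s

/-- `b` is a maximal parallel argument normal form of `u`. -/
noncomputable def MaxANF (R : Set (Rule σ V)) (u b : Term σ V) : Prop :=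
  ArgNF R b ∧ Relation.ReflTransGen (ParInnermostBelow R) u b ∧
    ∀ u', ArgNF R u' → Relation.ReflTransGen (ParInnermostBelow R) u u' →
      Dh (ParInnermost R) u' ≤ Dh (ParInnermost R) b

/-! ## Many-sorted type assignments -/

/-- Well-typedness of a term wrt a sort set `St`, a type assignment `arty`
(argument sorts and result sort for each symbol) and variable typing `vty`. -/
inductive WellTyped {τ : Type} (St : Type) (arty : τ → List St × St) (vty : V → St) :
    Term τ V → St → Prop
  | var (x : V) : WellTyped St arty vty (Term.var x) (vty x)
  | fn (f : τ) (ts : List (Term τ V)) :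
      ts.length = (arty f).1.length →
      (∀ p ∈ ts.zip (arty f).1, WellTyped St arty vty p.1 p.2) →
      WellTyped St arty vty (Term.fn f ts) (arty f).2

/-- A strict total order on positions extending the strict prefix order. -/
def TotalExtOfPrefix (gt' : List ℕ → List ℕ → Prop) : Prop :=
  (∀ π τ, PosGT π τ → gt' π τ) ∧
  (∀ π τ ρ, gt' π τ → gt' τ ρ → gt' π ρ) ∧
  (∀ π τ, gt' π τ → ¬ gt' τ π) ∧
  (∀ π τ, π ≠ τ → gt' π τ ∨ gt' τ π)


/-! ## Auxiliary development -/

section Aux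

variable {σ V : Type}

/-! ### ℕ∞ facts -/

lemma enat_sSup_mem {S : Set ℕ∞} (hne : S.Nonempty) (htop : sSup S ≠ ⊤) : sSup S ∈ S := by
  obtain ⟨n, hn⟩ : ∃ n : ℕ, sSup S = (n : ℕ∞) := by
    cases h : sSup S with
    | top => exact absurd h htop
    | coe n => exact ⟨n, rfl⟩
  induction n with
  | zero =>
    obtain ⟨e, he⟩ := hne
    have : e ≤ sSup S := le_sSup he
    rw [hn] at this
    simpa [hn, le_antisymm this (zero_le : 0 ≤ e)] using he
  | succ k ih =>
    by_contra hmem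
    have hle : ∀ e ∈ S, e ≤ (k : ℕ∞) := by
      intro e he
      have h1 : e ≤ ((k+1 : ℕ) : ℕ∞) := hn ▸ le_sSup he
      have h2 : e ≠ ((k+1 : ℕ) : ℕ∞) := by rintro rfl; rw [← hn] at he; exact hmem he
      have h3 : e < ((k+1 : ℕ) : ℕ∞) := lt_of_le_of_ne h1 h2
      cases e with
      | top => simp at h3
      | coe m =>
        have : m < k + 1 := by exact_mod_cast h3
        exact_mod_cast Nat.lt_succ_iff.mp this
    have : sSup S ≤ (k : ℕ∞) := sSup_le hle
    rw [hn] at this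
    have : (k+1 : ℕ) ≤ k := by exact_mod_cast this
    omega

lemma exists_ge_of_coe_le_sSup {S : Set ℕ∞} (hne : S.Nonempty) {m : ℕ}
    (h : (m : ℕ∞) ≤ sSup S) : ∃ d ∈ S, (m : ℕ∞) ≤ d := by
  rcases Nat.eq_zero_or_pos m with hm | hm
  · obtain ⟨e, he⟩ := hne; exact ⟨e, he, by simp [hm]⟩
  · by_contra hc
    push_neg at hc
    have hle : ∀ e ∈ S, e ≤ ((m-1 : ℕ) : ℕ∞) := by
      intro e he
      have := hc e he
      cases e with
      | top => exact absurd this (by simp)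
      | coe k =>
        have : k < m := by exact_mod_cast this
        exact_mod_cast Nat.le_sub_one_of_lt this
    have h2 : sSup S ≤ ((m-1:ℕ) : ℕ∞) := sSup_le hle
    have : (m : ℕ∞) ≤ ((m-1:ℕ) : ℕ∞) := le_trans h h2
    have : m ≤ m - 1 := by exact_mod_cast this
    omega

/-! ### iterRel and Dh -/

lemma iterRel_trans {α : Type} {r : α → α → Prop} :
    ∀ {m n : ℕ} {a b c : α}, iterRel r m a b → iterRel r n b c → iterRel r (m + n) a c := by
  intro m
  induction m with
  | zero => intro n a b c h1 h2; cases h1; simpa using h2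
  | succ k ih =>
    intro n a b c h1 h2
    obtain ⟨d, hd, hrest⟩ := h1
    have he : k + 1 + n = (k + n) + 1 := by omega
    rw [he]
    exact ⟨d, hd, ih hrest h2⟩

lemma le_Dh_of_iter {α : Type} {r : α → α → Prop} {n : ℕ} {t t' : α}
    (h : iterRel r n t t') : (n : ℕ∞) ≤ Dh r t :=
  le_sSup ⟨n, rfl, t', h⟩

lemma Dh_le_of_forall {α : Type} {r : α → α → Prop} {t : α} {d : ℕ∞}
    (h : ∀ n : ℕ, ∀ t', iterRel r n t t' → (n : ℕ∞) ≤ d) : Dh r t ≤ d := by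
  apply sSup_le
  rintro e ⟨n, rfl, t', ht'⟩
  exact h n t' ht'

lemma rtg_iff_iter {α : Type} {r : α → α → Prop} {a b : α} :
    Relation.ReflTransGen r a b ↔ ∃ n, iterRel r n a b := by
  constructor
  · intro h
    induction h with
    | refl => exact ⟨0, rfl⟩
    | tail _ hstep ih =>
      obtain ⟨n, hn⟩ := ih
      exact ⟨n + 1, iterRel_trans hn ⟨_, hstep, rfl⟩⟩
  · rintro ⟨n, hn⟩
    induction n generalizing a with
    | zero => cases hn; rfl
    | succ k ih =>
      obtain ⟨c, hc, hrest⟩ := hn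
      exact Relation.ReflTransGen.head hc (ih hrest)

lemma Dh_le_of_rtg {α : Type} {r : α → α → Prop} {a b : α}
    (h : Relation.ReflTransGen r a b) : Dh r b ≤ Dh r a := by
  obtain ⟨m, hm⟩ := rtg_iff_iter.mp h
  apply Dh_le_of_forall
  intro n t' hn
  calc (n : ℕ∞) ≤ ((m + n : ℕ) : ℕ∞) := by exact_mod_cast Nat.le_add_left n m
  _ ≤ Dh r a := le_Dh_of_iter (iterRel_trans hm hn)

lemma Dh_eq_zero_of_no_step {α : Type} {r : α → α → Prop} {t : α}
    (h : ∀ u, ¬ r t u) : Dh r t = 0 := by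
  apply le_antisymm _ zero_le
  apply Dh_le_of_forall
  intro n t' hn
  cases n with
  | zero => simp
  | succ k => obtain ⟨u, hu, _⟩ := hn; exact absurd hu (h u)

lemma Dh_attained {α : Type} {r : α → α → Prop} {t : α} (h : Dh r t ≠ ⊤) :
    ∃ n : ℕ, (∃ t', iterRel r n t t') ∧ Dh r t = (n : ℕ∞) := by
  have hne : {e : ℕ∞ | ∃ n : ℕ, e = (n : ℕ∞) ∧ ∃ t', iterRel r n t t'}.Nonempty :=
    ⟨0, 0, by simp, t, rfl⟩
  have := enat_sSup_mem hne h
  obtain ⟨n, hn, t', ht'⟩ := this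
  exact ⟨n, ⟨t', ht'⟩, hn ▸ rfl⟩

lemma Dh_lt_of_step {α : Type} {r : α → α → Prop} {t u : α}
    (hstep : r t u) (h : Dh r t ≠ ⊤) : Dh r u < Dh r t := by
  have hu : Dh r u ≤ Dh r t := Dh_le_of_rtg (Relation.ReflTransGen.single hstep)
  have hut : Dh r u ≠ ⊤ := fun he => h (top_le_iff.mp (he ▸ hu))
  obtain ⟨n, ⟨t', ht'⟩, hn⟩ := Dh_attained hut
  have : ((n + 1 : ℕ) : ℕ∞) ≤ Dh r t := le_Dh_of_iter ⟨u, hstep, ht'⟩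
  rw [hn]
  calc (n : ℕ∞) < ((n+1 : ℕ) : ℕ∞) := by exact_mod_cast Nat.lt_succ_self n
  _ ≤ Dh r t := this

lemma acc_of_no_infinite_chain {α : Type} {r : α → α → Prop} {a : α}
    (h : ¬ ∃ f : ℕ → α, f 0 = a ∧ ∀ i, r (f i) (f (i + 1))) :
    Acc (fun x y => r y x) a := by
  by_contra hacc
  have key : ∀ x : α, ¬ Acc (fun x y => r y x) x → ∃ y, r x y ∧ ¬ Acc (fun x y => r y x) y := by
    intro x hx
    by_contra hc
    push_neg at hc
    exact hx (Acc.intro x (fun y hy => hc y hy))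
  let g : {x : α // ¬ Acc (fun x y => r y x) x} → {x : α // ¬ Acc (fun x y => r y x) x} :=
    fun p => ⟨Classical.choose (key p.1 p.2), (Classical.choose_spec (key p.1 p.2)).2⟩
  have hg : ∀ p, r p.1 (g p).1 := fun p => (Classical.choose_spec (key p.1 p.2)).1
  let F : ℕ → {x : α // ¬ Acc (fun x y => r y x) x} := fun n => g^[n] ⟨a, hacc⟩
  refine h ⟨fun n => (F n).1, rfl, fun i => ?_⟩
  show r (F i).1 (F (i+1)).1
  have he : F (i + 1) = g (F i) := Function.iterate_succ_apply' g i ⟨a, hacc⟩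
  rw [he]
  exact hg (F i)

/-! ### Term basics -/

lemma term_size_induction {P : Term σ V → Prop}
    (h : ∀ t, (∀ s : Term σ V, s.size < t.size → P s) → P t) : ∀ t, P t := by
  intro t
  generalize hn : t.size = n
  induction n using Nat.strong_induction_on generalizing t with
  | _ n ih => exact h t (fun s hs => ih _ (hn ▸ hs) s rfl)

lemma size_le_sizeList {t : Term σ V} : ∀ {ts : List (Term σ V)}, t ∈ ts → t.size ≤ Term.sizeList ts := by
  intro ts
  induction ts with
  | nil => intro h; cases h
  | cons a l ih =>
    intro h
    rw [Term.sizeList]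
    rcases List.mem_cons.mp h with rfl | h
    · exact Nat.le_add_right _ _
    · exact le_trans (ih h) (Nat.le_add_left _ _)

lemma size_arg_lt {f : σ} {ts : List (Term σ V)} {t : Term σ V} (h : t ∈ ts) :
    t.size < (Term.fn f ts).size := by
  rw [Term.size]
  have := size_le_sizeList (t := t) h
  omega

lemma substList_eq_map (θ : V → Term σ V) : ∀ ts : List (Term σ V),
    Term.substList θ ts = ts.map (Term.subst θ) := by
  intro ts
  induction ts with
  | nil => rfl
  | cons a l ih => rw [Term.substList, ih]; rfl

lemma varIn_fn_iff {x : V} {f : σ} {ts : List (Term σ V)} :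
    Term.VarIn x (Term.fn f ts) ↔ ∃ t ∈ ts, Term.VarIn x t := by
  constructor
  · rintro (_ | ⟨hmem, hin⟩); exact ⟨_, hmem, hin⟩
  · rintro ⟨t, hmem, hin⟩; exact Term.VarIn.fn hmem hin

lemma subst_eq_of_varIn_eq : ∀ (w : Term σ V) (θ θ' : V → Term σ V),
    (∀ x, Term.VarIn x w → θ x = θ' x) → Term.subst θ w = Term.subst θ' w := by
  intro w
  induction w using term_size_induction with
  | h w ih =>
    intro θ θ' hx
    cases w with
    | var y => exact hx y Term.VarIn.var
    | fn f ts =>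
      rw [Term.subst, Term.subst, substList_eq_map, substList_eq_map]
      congr 1
      apply List.map_congr_left
      intro a ha
      exact ih a (size_arg_lt ha) θ θ' (fun x hin => hx x (Term.VarIn.fn ha hin))

lemma varIn_eq_of_subst_eq : ∀ (w : Term σ V) (θ θ' : V → Term σ V),
    Term.subst θ w = Term.subst θ' w → ∀ x, Term.VarIn x w → θ x = θ' x := by
  intro w
  induction w using term_size_induction with
  | h w ih =>
    intro θ θ' heq x hin
    cases w with
    | var y => cases hin; exact heq
    | fn f ts =>
      rw [Term.subst, Term.subst, substList_eq_map, substList_eq_map] at heq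
      have hlists : ts.map (Term.subst θ) = ts.map (Term.subst θ') := by
        injection heq
      rcases varIn_fn_iff.mp hin with ⟨t, hmem, hint⟩
      have hpt : ∀ a ∈ ts, Term.subst θ a = Term.subst θ' a := List.map_inj_left.mp hlists
      exact ih t (size_arg_lt hmem) θ θ' (hpt t hmem) x hint

lemma subtermAt_fn {f : σ} {ts : List (Term σ V)} {i : ℕ} {π : List ℕ} {u : Term σ V}
    (h : ts[i]? = some u) : (Term.fn f ts).subtermAt (i :: π) = u.subtermAt π := by
  rw [Term.subtermAt, h]

lemma subtermAt_fn_inv {f : σ} {ts : List (Term σ V)} {i : ℕ} {π : List ℕ} {u : Term σ V}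
    (h : (Term.fn f ts).subtermAt (i :: π) = some u) :
    ∃ a, ts[i]? = some a ∧ a.subtermAt π = some u := by
  rw [Term.subtermAt] at h
  cases ha : ts[i]? with
  | none => rw [ha] at h; cases h
  | some a => rw [ha] at h; exact ⟨a, rfl, h⟩

lemma replaceAt_isSome : ∀ (π : List ℕ) (t u s : Term σ V),
    t.subtermAt π = some u → ∃ t', t.replaceAt π s = some t' := by
  intro π
  induction π with
  | nil => intro t u s _; exact ⟨s, by simp [Term.replaceAt]⟩
  | cons i ρ ih =>
    intro t u s h
    cases t with
    | var y => rw [Term.subtermAt] at h; cases h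
    | fn f ts =>
      obtain ⟨a, ha, hsub⟩ := subtermAt_fn_inv h
      obtain ⟨w, hw⟩ := ih a u s hsub
      exact ⟨Term.fn f (ts.set i w), by simp only [Term.replaceAt, ha, hw]⟩

lemma subtermAt_append : ∀ (π ρ : List ℕ) (t : Term σ V),
    t.subtermAt (π ++ ρ) = (t.subtermAt π).bind (fun u => u.subtermAt ρ) := by
  intro π
  induction π with
  | nil => intro ρ t; simp [Term.subtermAt]
  | cons i π' ih =>
    intro ρ t
    cases t with
    | var y => simp [Term.subtermAt]
    | fn f ts =>
      cases ha : ts[i]? with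
      | none => simp [Term.subtermAt, ha]
      | some a => simp only [List.cons_append, Term.subtermAt, ha]; exact ih ρ a

lemma replaceAt_append_exists : ∀ (π : List ℕ) (t a : Term σ V) (ρ : List ℕ) (s v : Term σ V),
    t.subtermAt π = some a → a.replaceAt ρ s = some v →
    ∃ w, t.replaceAt (π ++ ρ) s = some w := by
  intro π
  induction π with
  | nil =>
    intro t a ρ s v h hr
    rw [Term.subtermAt] at h
    cases h
    exact ⟨v, hr⟩
  | cons i π' ih =>
    intro t a ρ s v h hr
    cases t with
    | var y => rw [Term.subtermAt] at h; cases h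
    | fn f ts =>
      obtain ⟨b, hb, hsub⟩ := subtermAt_fn_inv h
      obtain ⟨w, hw⟩ := ih b a ρ s v hsub hr
      refine ⟨Term.fn f (ts.set i w), ?_⟩
      simp only [List.cons_append, Term.replaceAt, hb, List.append_eq, hw]

/-! ### Normal forms and redexes -/

variable {R : Set (Rule σ V)}

lemma lhs_fn_of_wf (hR : IsWfTRS R) {r : Rule σ V} (hr : r ∈ R) :
    ∃ f ts, r.lhs = Term.fn f ts := by
  have h := hR.2.1 r hr
  cases hl : r.lhs with
  | var x => exact absurd ⟨x, hl⟩ h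
  | fn f ts => exact ⟨f, ts, rfl⟩

lemma redex_defined_root (hR : IsWfTRS R) {t : Term σ V} (h : IsRedex R t) :
    HasDefinedRoot R t := by
  obtain ⟨r, hr, θ, rfl⟩ := h
  obtain ⟨f, ts, hlhs⟩ := lhs_fn_of_wf hR hr
  rw [hlhs, Term.subst]
  exact ⟨f, _, rfl, r, hr, ts, hlhs⟩

lemma rewrite_of_redex_at {t u : Term σ V} {π : List ℕ}
    (hsub : t.subtermAt π = some u) (hu : IsRedex R u) : ∃ v, Rewrite R t v := by
  obtain ⟨r, hr, θ, hm⟩ := hu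
  obtain ⟨t', ht'⟩ := replaceAt_isSome π t u (Term.subst θ r.rhs) hsub
  exact ⟨t', π, r, hr, θ, by rw [hsub, hm], ht'⟩

lemma nf_iff_no_redex {t : Term σ V} :
    NormalForm R t ↔ ∀ π u, t.subtermAt π = some u → ¬ IsRedex R u := by
  constructor
  · intro hnf π u hsub hred
    exact hnf (rewrite_of_redex_at hsub hred)
  · rintro h ⟨v, π, r, hr, θ, hm, _⟩
    exact h π _ hm ⟨r, hr, θ, rfl⟩

lemma nf_subterm {t u : Term σ V} {π : List ℕ}
    (hnf : NormalForm R t) (h : t.subtermAt π = some u) : NormalForm R u := by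
  rw [nf_iff_no_redex] at hnf ⊢
  intro ρ v hv
  apply hnf (π ++ ρ) v
  rw [subtermAt_append, h]
  exact hv

lemma var_nf (hR : IsWfTRS R) (x : V) : NormalForm R (Term.var x : Term σ V) := by
  rw [nf_iff_no_redex]
  intro π u hsub hred
  cases π with
  | nil =>
    rw [Term.subtermAt] at hsub
    cases hsub
    obtain ⟨r, hr, θ, hm⟩ := hred
    obtain ⟨f, ts, hlhs⟩ := lhs_fn_of_wf hR hr
    rw [hlhs, Term.subst] at hm
    cases hm
  | cons i ρ => rw [Term.subtermAt] at hsub; cases hsub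

lemma innermost_to_rewrite {s t : Term σ V} (h : InnermostRewrite R s t) :
    Rewrite R s t := by
  obtain ⟨π, r, hr, θ, hm, _, hrep⟩ := h
  exact ⟨π, r, hr, θ, hm, hrep⟩

lemma parinnermost_tg {s t : Term σ V} (h : ParInnermost R s t) :
    Relation.TransGen (InnermostRewrite R) s t := by
  cases h with
  | redex htg _ _ => exact htg
  | congr _ _ _ htg _ _ => exact htg

lemma no_parinnermost_of_nf {s t : Term σ V} (hnf : NormalForm R s) :
    ¬ ParInnermost R s t := by
  intro h
  have htg := parinnermost_tg h
  clear h
  have hfirst : ∃ c, InnermostRewrite R s c := by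
    induction htg with
    | single hstep => exact ⟨_, hstep⟩
    | tail _ _ ih => exact ih
  obtain ⟨c, hc⟩ := hfirst
  exact hnf ⟨_, innermost_to_rewrite hc⟩

lemma mem_getElem'  {α : Type} {l : List α} {a : α} (h : a ∈ l) : ∃ i : ℕ, l[i]? = some a := by
  obtain ⟨i, hi, hget⟩ := List.mem_iff_getElem.mp h
  exact ⟨i, by rw [List.getElem?_eq_getElem hi, hget]⟩

lemma nf_args_of_inner_redex {f : σ} {ts : List (Term σ V)}
    (h : IsInnermostRedex R (Term.fn f ts)) : ∀ u ∈ ts, NormalForm R u := by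
  intro u hu
  obtain ⟨i, hi⟩ := mem_getElem' hu
  rw [nf_iff_no_redex]
  intro ρ v hv hred
  refine h.2 (i :: ρ) (by simp) v ?_ hred
  rw [subtermAt_fn hi]
  exact hv

lemma step_of_inner_redex {t : Term σ V} (hin : IsInnermostRedex R t) :
    ∃ t', InnermostRewrite R t t' := by
  obtain ⟨r, hr, θ, hm⟩ := hin.1
  refine ⟨Term.subst θ r.rhs, [], r, hr, θ, ?_, ?_, ?_⟩
  · rw [Term.subtermAt, hm]
  · rw [← hm]; exact hin
  · simp [Term.replaceAt]

/-! ### Context lifting -/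

lemma getElem?_append_mid {α : Type} (pre : List α) (a : α) (post : List α) :
    (pre ++ a :: post)[pre.length]? = some a := by
  induction pre with
  | nil => simp
  | cons x l ih => simpa using ih

lemma set_append_mid {α : Type} (pre : List α) (a b : α) (post : List α) :
    (pre ++ a :: post).set pre.length b = pre ++ b :: post := by
  induction pre with
  | nil => rfl
  | cons x l ih => simp [List.set, ih]

lemma list_decomp {α : Type} {l : List α} {k : ℕ} (hk : k < l.length) :
    l = l.take k ++ l[k] :: l.drop (k + 1) := by
  conv_lhs => rw [← List.take_append_drop k l]
  rw [List.drop_eq_getElem_cons hk]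

lemma innermost_ctx_mid {a b : Term σ V} (h : InnermostRewrite R a b)
    (f : σ) (pre post : List (Term σ V)) :
    InnermostRewrite R (Term.fn f (pre ++ a :: post)) (Term.fn f (pre ++ b :: post)) := by
  obtain ⟨π, r, hr, θ, hm, hired, hrep⟩ := h
  refine ⟨pre.length :: π, r, hr, θ, ?_, hired, ?_⟩
  · rw [subtermAt_fn (getElem?_append_mid pre a post)]; exact hm
  · rw [Term.replaceAt]
    rw [getElem?_append_mid pre a post]
    simp only [hrep]
    rw [set_append_mid]

lemma tg_ctx_mid {a b : Term σ V} (h : Relation.TransGen (InnermostRewrite R) a b)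
    (f : σ) (pre post : List (Term σ V)) :
    Relation.TransGen (InnermostRewrite R)
      (Term.fn f (pre ++ a :: post)) (Term.fn f (pre ++ b :: post)) := by
  induction h with
  | single hs => exact Relation.TransGen.single (innermost_ctx_mid hs f pre post)
  | tail _ hs ih => exact Relation.TransGen.tail ih (innermost_ctx_mid hs f pre post)

/-- pointwise relation used for congruence steps -/
def argRel (R : Set (Rule σ V)) (s t : Term σ V) : Prop :=
  s = t ∨ Relation.TransGen (InnermostRewrite R) s t

lemma rtg_args_aux (f : σ) : ∀ {ss ts : List (Term σ V)}, List.Forall₂ (argRel R) ss ts →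
    ∀ pre : List (Term σ V),
    Relation.ReflTransGen (InnermostRewrite R) (Term.fn f (pre ++ ss)) (Term.fn f (pre ++ ts)) := by
  intro ss ts h
  induction h with
  | nil => intro pre; exact Relation.ReflTransGen.refl
  | @cons s t ss' ts' hst _ ih =>
    intro pre
    have step1 : Relation.ReflTransGen (InnermostRewrite R)
        (Term.fn f (pre ++ s :: ss')) (Term.fn f (pre ++ t :: ss')) := by
      rcases hst with rfl | htg
      · exact Relation.ReflTransGen.refl
      · exact (tg_ctx_mid htg f pre ss').to_reflTransGen
    refine step1.trans ?_
    have h1 : pre ++ t :: ss' = (pre ++ [t]) ++ ss' := by simp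
    have h2 : pre ++ t :: ts' = (pre ++ [t]) ++ ts' := by simp
    rw [h1, h2]
    exact ih (pre ++ [t])

lemma rtg_args (f : σ) {ss ts : List (Term σ V)} (h : List.Forall₂ (argRel R) ss ts) :
    Relation.ReflTransGen (InnermostRewrite R) (Term.fn f ss) (Term.fn f ts) := by
  have := rtg_args_aux f h []
  simpa using this

lemma tg_ctx {a b : Term σ V} (h : Relation.TransGen (InnermostRewrite R) a b)
    (f : σ) (ss : List (Term σ V)) (k : ℕ) (hk : k < ss.length) (ha : ss[k] = a) :
    Relation.TransGen (InnermostRewrite R) (Term.fn f ss) (Term.fn f (ss.set k b)) := by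
  have hdec := list_decomp hk
  have hlen : (ss.take k).length = k := List.length_take_of_le (le_of_lt hk)
  have hset0 := set_append_mid (ss.take k) (ss[k]) b (ss.drop (k + 1))
  rw [hlen] at hset0
  have hset : ss.set k b = ss.take k ++ b :: ss.drop (k + 1) := by
    conv_lhs => rw [hdec]
    exact hset0
  rw [hset]
  conv_lhs => rw [hdec]
  rw [ha]
  exact tg_ctx_mid h f _ _

lemma forall₂_argRel_of_pointwise {ss ts : List (Term σ V)} (hlen : ss.length = ts.length)
    (h : ∀ k (hk : k < ss.length) (hk' : k < ts.length), argRel R ss[k] ts[k]) :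
    List.Forall₂ (argRel R) ss ts := by
  rw [List.forall₂_iff_get]
  refine ⟨hlen, fun i h1 h2 => ?_⟩
  simpa [List.get_eq_getElem] using h i h1 h2

lemma tg_args (f : σ) {ss ts : List (Term σ V)} (hF : List.Forall₂ (argRel R) ss ts)
    {k : ℕ} (hk : k < ss.length) (hk' : k < ts.length)
    (hTG : Relation.TransGen (InnermostRewrite R) ss[k] ts[k]) :
    Relation.TransGen (InnermostRewrite R) (Term.fn f ss) (Term.fn f ts) := by
  have hlen : ss.length = ts.length := hF.length_eq
  have step1 : Relation.TransGen (InnermostRewrite R)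
      (Term.fn f ss) (Term.fn f (ss.set k ts[k])) := tg_ctx hTG f ss k hk rfl
  refine step1.trans_left ?_
  apply rtg_args f
  apply forall₂_argRel_of_pointwise (by simp [hlen])
  intro j hj hj'
  rcases eq_or_ne j k with rfl | hne
  · left; simp [List.getElem_set]
  · have : (ss.set k ts[k])[j] = ss[j] := by
      rw [List.getElem_set, if_neg (Ne.symm hne)]
    rw [this]
    have := hF.get (x := ss) (y := ts) (i := j) (by simpa using hj) hj'
    simpa [List.get_eq_getElem] using this

/-! ### Building and inverting parallel-innermost steps -/

lemma build_congr (f : σ) {ss ts : List (Term σ V)} (hlen : ss.length = ts.length)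
    (hpt : ∀ j (hj : j < ss.length) (hj' : j < ts.length),
      (ss[j] = ts[j] ∧ NormalForm R ss[j]) ∨ ParInnermost R ss[j] ts[j])
    {k : ℕ} (hk : k < ss.length) (hk' : k < ts.length)
    (hstep : ParInnermost R ss[k] ts[k]) :
    ParInnermost R (Term.fn f ss) (Term.fn f ts) := by
  have hF : List.Forall₂ (argRel R) ss ts := by
    apply forall₂_argRel_of_pointwise hlen
    intro j hj hj'
    rcases hpt j hj hj' with ⟨heq, _⟩ | hpi
    · exact Or.inl heq
    · exact Or.inr (parinnermost_tg hpi)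
  have htg := tg_args f hF hk hk' (parinnermost_tg hstep)
  refine ParInnermost.congr f ss ts htg hlen ?_
  intro p hp hne
  obtain ⟨j, hj, hpj⟩ := List.mem_iff_getElem.mp hp
  have hj1 : j < ss.length := lt_of_lt_of_le hj (by rw [List.length_zip]; exact min_le_left _ _)
  have hj2 : j < ts.length := lt_of_lt_of_le hj (by rw [List.length_zip]; exact min_le_right _ _)
  have hzip : (ss.zip ts)[j] = (ss[j], ts[j]) := List.getElem_zip ..
  rw [hzip] at hpj
  subst hpj
  rcases hpt j hj1 hj2 with ⟨heq, hnf⟩ | hpi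
  · exact absurd ⟨heq, hnf⟩ hne
  · exact hpi

lemma congr_inversion {f : σ} {ss : List (Term σ V)} {w : Term σ V}
    (h : ParInnermost R (Term.fn f ss) w) (hni : ¬ IsInnermostRedex R (Term.fn f ss)) :
    ∃ ts, w = Term.fn f ts ∧ ss.length = ts.length ∧
      ∀ j (hj : j < ss.length) (hj' : j < ts.length),
        (ss[j] = ts[j] ∧ NormalForm R ss[j]) ∨ ParInnermost R ss[j] ts[j] := by
  cases h with
  | redex _ hin _ => exact absurd hin hni
  | congr _ _ ts _ hlen hzip =>
    refine ⟨ts, rfl, hlen, fun j hj hj' => ?_⟩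
    by_cases hc : ss[j] = ts[j] ∧ NormalForm R ss[j]
    · exact Or.inl hc
    · refine Or.inr (hzip (ss[j], ts[j]) ?_ hc)
      have hjz : j < (ss.zip ts).length := by rw [List.length_zip]; omega
      have := List.getElem_mem hjz
      rwa [List.getElem_zip] at this

lemma step_list_exists : ∀ (l : List (Term σ V)),
    (∀ u ∈ l, ¬ NormalForm R u → ∃ u', ParInnermost R u u') →
    ∃ l' : List (Term σ V), l.length = l'.length ∧
      ∀ j (hj : j < l.length) (hj' : j < l'.length),
        (l[j] = l'[j] ∧ NormalForm R l[j]) ∨ ParInnermost R l[j] l'[j] := by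
  intro l
  induction l with
  | nil => intro _; exact ⟨[], rfl, fun j hj => by simp at hj⟩
  | cons a l ih =>
    intro hstep
    obtain ⟨l', hlen, hpt⟩ := ih (fun u hu => hstep u (List.mem_cons_of_mem a hu))
    by_cases hnf : NormalForm R a
    · refine ⟨a :: l', by simp [hlen], fun j hj hj' => ?_⟩
      cases j with
      | zero => exact Or.inl ⟨rfl, hnf⟩
      | succ i => exact hpt i (by simpa using hj) (by simpa using hj')
    · obtain ⟨a', ha'⟩ := hstep a List.mem_cons_self hnf
      refine ⟨a' :: l', by simp [hlen], fun j hj hj' => ?_⟩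
      cases j with
      | zero => exact Or.inr ha'
      | succ i => exact hpt i (by simpa using hj) (by simpa using hj')

lemma not_nf_cases (hR : IsWfTRS R) {f : σ} {ts : List (Term σ V)}
    (hall : ∀ u ∈ ts, NormalForm R u) (hnf : ¬ NormalForm R (Term.fn f ts)) :
    IsInnermostRedex R (Term.fn f ts) := by
  have hsubnf : ∀ (π : List ℕ), π ≠ [] → ∀ u, (Term.fn f ts).subtermAt π = some u → ¬ IsRedex R u := by
    intro π hne u hsub hred
    cases π with
    | nil => exact hne rfl
    | cons i ρ =>
      obtain ⟨a, ha, hsa⟩ := subtermAt_fn_inv hsub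
      have hmem : a ∈ ts := by
        obtain ⟨h1, h2⟩ := List.getElem?_eq_some_iff.mp ha
        exact h2 ▸ List.getElem_mem h1
      exact (nf_iff_no_redex.mp (hall a hmem)) ρ u hsa hred
  have hred : IsRedex R (Term.fn f ts) := by
    rw [NormalForm] at hnf
    push_neg at hnf
    obtain ⟨v, π, r, hr, θ, hm, _⟩ := not_not.mp (by simpa [NormalForm] using hnf)
    cases π with
    | nil =>
      rw [Term.subtermAt] at hm
      exact ⟨r, hr, θ, by injection hm⟩
    | cons i ρ =>
      exact absurd ⟨r, hr, θ, rfl⟩ (hsubnf (i :: ρ) (by simp) _ hm)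
  exact ⟨hred, hsubnf⟩

lemma step_exists (hR : IsWfTRS R) : ∀ t : Term σ V, ¬ NormalForm R t →
    ∃ t', ParInnermost R t t' := by
  intro t
  induction t using term_size_induction with
  | h t ih =>
    intro hnf
    cases t with
    | var x => exact absurd (var_nf hR x) hnf
    | fn f ts =>
      by_cases hall : ∀ u ∈ ts, NormalForm R u
      · have hin := not_nf_cases hR hall hnf
        obtain ⟨t', ht'⟩ := step_of_inner_redex hin
        exact ⟨t', ParInnermost.redex (Relation.TransGen.single ht') hin ht'⟩
      · push_neg at hall
        obtain ⟨u, hu, hunf⟩ := hall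
        obtain ⟨l', hlen, hpt⟩ := step_list_exists ts
          (fun v hv hvnf => ih v (size_arg_lt hv) hvnf)
        obtain ⟨k, hk, hk2⟩ := List.mem_iff_getElem.mp hu
        have hk' : k < l'.length := hlen ▸ hk
        have hstep : ParInnermost R ts[k] l'[k] := by
          rcases hpt k hk hk' with ⟨_, hnfk⟩ | hpi
          · rw [hk2] at hnfk; exact absurd hnfk hunf
          · exact hpi
        exact ⟨Term.fn f l', build_congr f hlen hpt hk hk' hstep⟩

lemma not_inner_redex_of_arg_not_nf {f : σ} {ts : List (Term σ V)}
    (h : ∃ u ∈ ts, ¬ NormalForm R u) : ¬ IsInnermostRedex R (Term.fn f ts) := by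
  intro hin
  obtain ⟨u, hu, hunf⟩ := h
  exact hunf (nf_args_of_inner_redex hin u hu)

lemma below_step_exists (hR : IsWfTRS R) {f : σ} {ts : List (Term σ V)}
    (h : ∃ u ∈ ts, ¬ NormalForm R u) :
    ∃ t', ParInnermostBelow R (Term.fn f ts) t' := by
  obtain ⟨u, hu, hunf⟩ := h
  obtain ⟨l', hlen, hpt⟩ := step_list_exists ts (fun v _ hvnf => step_exists hR v hvnf)
  obtain ⟨k, hk, hk2⟩ := List.mem_iff_getElem.mp hu
  have hk' : k < l'.length := hlen ▸ hk
  have hstep : ParInnermost R ts[k] l'[k] := by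
    rcases hpt k hk hk' with ⟨_, hnfk⟩ | hpi
    · rw [hk2] at hnfk; exact absurd hnfk hunf
    · exact hpi
  exact ⟨Term.fn f l', build_congr f hlen hpt hk hk' hstep,
    not_inner_redex_of_arg_not_nf ⟨u, hu, hunf⟩⟩

lemma not_argnf_cases {t : Term σ V} (h : ¬ ArgNF R t) :
    ∃ f ts, t = Term.fn f ts ∧ ∃ u ∈ ts, ¬ NormalForm R u := by
  cases t with
  | var x => exact absurd (Or.inl ⟨x, rfl⟩) h
  | fn f ts =>
    refine ⟨f, ts, rfl, ?_⟩
    by_contra hc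
    push_neg at hc
    exact h (Or.inr ⟨f, ts, rfl, fun u hu => hc u hu⟩)

/-! ### Lifting derivations into contexts -/

lemma lift_arg_iter (hR : IsWfTRS R) : ∀ (n : ℕ) (a b : Term σ V),
    iterRel (ParInnermost R) n a b →
    ∀ (f : σ) (ss : List (Term σ V)) (k : ℕ) (hk : k < ss.length), ss[k] = a →
    ∃ c, iterRel (ParInnermost R) n (Term.fn f ss) c := by
  intro n
  induction n with
  | zero => intro a b _ f ss _ _ _; exact ⟨Term.fn f ss, rfl⟩
  | succ m ih =>
    intro a b hab f ss k hk ha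
    obtain ⟨a₁, ha₁, hrest⟩ := hab
    obtain ⟨l', hlen, hpt⟩ := step_list_exists ss (fun v _ hvnf => step_exists hR v hvnf)
    set v := l'.set k a₁ with hv
    have hk' : k < l'.length := hlen ▸ hk
    have hlenv : ss.length = v.length := by simp [hv, hlen]
    have hkv : k < v.length := hlenv ▸ hk
    have hvk : v[k] = a₁ := by simp only [hv]; rw [List.getElem_set, if_pos rfl]
    have hptv : ∀ j (hj : j < ss.length) (hj' : j < v.length),
        (ss[j] = v[j] ∧ NormalForm R ss[j]) ∨ ParInnermost R ss[j] v[j] := by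
      intro j hj hj'
      rcases eq_or_ne j k with rfl | hne
      · rw [hvk, ha]; exact Or.inr ha₁
      · have : v[j] = l'[j] := by
          simp only [hv]; rw [List.getElem_set, if_neg (Ne.symm hne)]
        rw [this]
        exact hpt j hj (by simpa [hv] using hj')
    have hstepk : ParInnermost R ss[k] v[k] := by rw [hvk, ha]; exact ha₁
    have hparent : ParInnermost R (Term.fn f ss) (Term.fn f v) :=
      build_congr f hlenv hptv hk hkv hstepk
    obtain ⟨c, hc⟩ := ih a₁ b hrest f v k hkv hvk
    exact ⟨c, Term.fn f v, hparent, hc⟩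

lemma Dh_arg_le (hR : IsWfTRS R) {f : σ} {ss : List (Term σ V)} {k : ℕ} (hk : k < ss.length) :
    Dh (ParInnermost R) ss[k] ≤ Dh (ParInnermost R) (Term.fn f ss) := by
  apply Dh_le_of_forall
  intro n t' hn
  obtain ⟨c, hc⟩ := lift_arg_iter hR n ss[k] t' hn f ss k hk rfl
  exact le_Dh_of_iter hc

lemma Dh_subterm_le (hR : IsWfTRS R) : ∀ (π : List ℕ) (t u : Term σ V),
    t.subtermAt π = some u → Dh (ParInnermost R) u ≤ Dh (ParInnermost R) t := by
  intro π
  induction π with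
  | nil => intro t u h; rw [Term.subtermAt] at h; cases h; exact le_refl _
  | cons i ρ ih =>
    intro t u h
    cases t with
    | var x => rw [Term.subtermAt] at h; cases h
    | fn f ts =>
      obtain ⟨a, ha, hsa⟩ := subtermAt_fn_inv h
      obtain ⟨hi, ha'⟩ := List.getElem?_eq_some_iff.mp ha
      calc Dh (ParInnermost R) u ≤ Dh (ParInnermost R) a := ih a u hsa
      _ = Dh (ParInnermost R) ts[i] := by rw [ha']
      _ ≤ _ := Dh_arg_le hR hi

/-! ### Maximal parallel argument normal forms -/

lemma anf_reachable (hR : IsWfTRS R) : ∀ (N : ℕ) (t : Term σ V),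
    Dh (ParInnermost R) t ≠ ⊤ → (Dh (ParInnermost R) t).toNat ≤ N →
    ∃ u, ArgNF R u ∧ Relation.ReflTransGen (ParInnermostBelow R) t u := by
  intro N
  induction N with
  | zero =>
    intro t htop hle
    by_cases hanf : ArgNF R t
    · exact ⟨t, hanf, Relation.ReflTransGen.refl⟩
    · obtain ⟨f, ts, rfl, hex⟩ := not_argnf_cases hanf
      obtain ⟨t₁, ht₁⟩ := below_step_exists hR hex
      have h1 : (1 : ℕ∞) ≤ Dh (ParInnermost R) (Term.fn f ts) :=
        le_Dh_of_iter (n := 1) ⟨t₁, ht₁.1, rfl⟩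
      have : Dh (ParInnermost R) (Term.fn f ts) = 0 := by
        have := ENat.toNat_eq_zero.mp (Nat.le_zero.mp hle)
        tauto
      rw [this] at h1
      simp at h1
  | succ N ihN =>
    intro t htop hle
    by_cases hanf : ArgNF R t
    · exact ⟨t, hanf, Relation.ReflTransGen.refl⟩
    · obtain ⟨f, ts, rfl, hex⟩ := not_argnf_cases hanf
      obtain ⟨t₁, ht₁⟩ := below_step_exists hR hex
      have hlt : Dh (ParInnermost R) t₁ < Dh (ParInnermost R) (Term.fn f ts) :=
        Dh_lt_of_step ht₁.1 htop
      have htop₁ : Dh (ParInnermost R) t₁ ≠ ⊤ := (hlt.trans_le le_top).ne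
      have hle₁ : (Dh (ParInnermost R) t₁).toNat ≤ N := by
        have h2 : (Dh (ParInnermost R) t₁).toNat < (Dh (ParInnermost R) (Term.fn f ts)).toNat := by
          generalize hx : Dh (ParInnermost R) t₁ = x at *
          generalize hy : Dh (ParInnermost R) (Term.fn f ts) = y at *
          lift x to ℕ using htop₁
          lift y to ℕ using htop
          simp only [ENat.toNat_coe]
          exact_mod_cast hlt
        omega
      obtain ⟨u, hu, hru⟩ := ihN t₁ htop₁ hle₁
      exact ⟨u, hu, Relation.ReflTransGen.head ht₁ hru⟩

lemma maxanf_exists (hR : IsWfTRS R) {t : Term σ V}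
    (h : Dh (ParInnermost R) t ≠ ⊤) : ∃ b, MaxANF R t b := by
  set A := {u : Term σ V | ArgNF R u ∧ Relation.ReflTransGen (ParInnermostBelow R) t u} with hA
  set S := (Dh (ParInnermost R)) '' A with hS
  have hne : S.Nonempty := by
    obtain ⟨u, hu, hru⟩ := anf_reachable hR (Dh (ParInnermost R) t).toNat t h le_rfl
    exact ⟨Dh (ParInnermost R) u, u, ⟨hu, hru⟩, rfl⟩
  have hbd : ∀ e ∈ S, e ≤ Dh (ParInnermost R) t := by
    rintro e ⟨u, ⟨_, hru⟩, rfl⟩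
    exact Dh_le_of_rtg (hru.lift id (fun _ _ (hp : ParInnermostBelow R _ _) => hp.1))
  have htop : sSup S ≠ ⊤ := by
    intro hc
    exact h (top_le_iff.mp (hc ▸ sSup_le hbd))
  obtain ⟨u, hu, hDu⟩ := enat_sSup_mem hne htop
  refine ⟨u, hu.1, hu.2, fun u' hanf hru' => ?_⟩
  rw [hDu]
  exact le_sSup ⟨u', ⟨hanf, hru'⟩, rfl⟩

/-! ### Positions with defined symbols -/

lemma hasDefinedRoot_fn_iff {f : σ} {ts : List (Term σ V)} :
    HasDefinedRoot R (Term.fn f ts) ↔ Defined R f := by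
  constructor
  · rintro ⟨g, us, heq, hd⟩
    injection heq with h1 h2
    exact h1 ▸ hd
  · intro h; exact ⟨f, ts, rfl, h⟩

lemma posd_nil_iff {t : Term σ V} : ([] : List ℕ) ∈ PosD R t ↔ HasDefinedRoot R t := by
  constructor
  · rintro ⟨u, hu, hd⟩
    rw [Term.subtermAt] at hu; cases hu; exact hd
  · intro h; exact ⟨t, by rw [Term.subtermAt], h⟩

lemma posd_cons_iff {f : σ} {ts : List (Term σ V)} {i : ℕ} {π : List ℕ} :
    (i :: π) ∈ PosD R (Term.fn f ts) ↔ ∃ a, ts[i]? = some a ∧ π ∈ PosD R a := by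
  constructor
  · rintro ⟨u, hu, hd⟩
    obtain ⟨a, ha, hsa⟩ := subtermAt_fn_inv hu
    exact ⟨a, ha, u, hsa, hd⟩
  · rintro ⟨a, ha, u, hau, hd⟩
    exact ⟨u, by rw [subtermAt_fn ha]; exact hau, hd⟩

lemma positions_finite : ∀ t : Term σ V, {π : List ℕ | ∃ u, t.subtermAt π = some u}.Finite := by
  intro t
  induction t using term_size_induction with
  | h t ih =>
    cases t with
    | var x =>
      apply Set.Finite.subset (Set.finite_singleton ([] : List ℕ))
      rintro π ⟨u, hu⟩
      cases π with
      | nil => rfl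
      | cons i ρ => rw [Term.subtermAt] at hu; cases hu
    | fn f ts =>
      have hfin : (({[]} : Set (List ℕ)) ∪
          ⋃ i : Fin ts.length, (List.cons i.1) ''
            {π | ∃ u, (ts.get i).subtermAt π = some u}).Finite := by
        apply Set.Finite.union (Set.finite_singleton _)
        apply Set.finite_iUnion
        intro i
        exact (ih (ts.get i) (size_arg_lt (by simpa using ts.get_mem i.1 i.2))).image _
      apply Set.Finite.subset hfin
      rintro π ⟨u, hu⟩
      cases π with
      | nil => exact Or.inl rfl
      | cons i ρ =>
        obtain ⟨a, ha, hsa⟩ := subtermAt_fn_inv hu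
        obtain ⟨hi, ha'⟩ := List.getElem?_eq_some_iff.mp ha
        refine Or.inr (Set.mem_iUnion.mpr ⟨⟨i, hi⟩, ⟨ρ, ⟨u, ?_⟩, rfl⟩⟩)
        simpa [List.get_eq_getElem, ha'] using hsa

lemma posd_finite (t : Term σ V) : (PosD R t).Finite := by
  apply Set.Finite.subset (positions_finite t)
  rintro π ⟨u, hu, _⟩
  exact ⟨u, hu⟩

lemma nf_of_posd_empty (hR : IsWfTRS R) {t : Term σ V} (h : PosD R t = ∅) :
    NormalForm R t := by
  rw [nf_iff_no_redex]
  intro π u hsub hred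
  have : π ∈ PosD R t := ⟨u, hsub, redex_defined_root hR hred⟩
  rw [h] at this
  exact this

/-! ### Position order facts -/

lemma posGT_length {τ π : List ℕ} (h : PosGT τ π) : π.length < τ.length := by
  obtain ⟨π', hne, rfl⟩ := h
  simp only [List.length_append]
  have : 0 < π'.length := List.length_pos_iff.mpr hne
  omega

lemma posGT_cons_iff {i : ℕ} {τ π : List ℕ} : PosGT (i :: τ) (i :: π) ↔ PosGT τ π := by
  constructor
  · rintro ⟨π', hne, happ⟩
    rw [List.cons_append] at happ
    injection happ with _ h2
    exact ⟨π', hne, h2⟩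
  · rintro ⟨π', hne, rfl⟩
    exact ⟨π', hne, rfl⟩

lemma posGT_nil {π : List ℕ} (h : π ≠ []) : PosGT π [] := ⟨π, h, rfl⟩

lemma not_posGT_nil {π : List ℕ} : ¬ PosGT ([] : List ℕ) π := by
  rintro ⟨π', hne, happ⟩
  exact hne (List.append_eq_nil_iff.mp happ).2

lemma pairwise_inits : ∀ l : List ℕ, l.inits.Pairwise (fun a b => PosGT b a) := by
  intro l
  induction l with
  | nil => simp [List.inits]
  | cons a l ih =>
    rw [List.inits]
    refine List.Pairwise.cons ?_ ?_
    · intro b hb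
      obtain ⟨τ, _, rfl⟩ := List.mem_map.mp hb
      exact posGT_nil (by simp)
    · rw [List.pairwise_map]
      exact ih.imp (fun h => by
        obtain ⟨π', hne, rfl⟩ := h
        exact ⟨π', hne, rfl⟩)

lemma reverse_inits_cons : ∀ l : List ℕ, ∃ rest, l.inits.reverse = l :: rest := by
  intro l
  induction l with
  | nil => exact ⟨[], rfl⟩
  | cons a l ih =>
    obtain ⟨rest, hrest⟩ := ih
    refine ⟨rest.map (a :: ·) ++ [[]], ?_⟩
    rw [List.inits, List.reverse_cons, ← List.map_reverse, hrest]
    simp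

open Classical in
lemma msdc_exists (R : Set (Rule σ V)) (t : Term σ V) :
    ∃ c, MSDC R t c ∧ (([] : List ℕ) ∈ PosD R t → [] ∈ c) := by
  by_cases hP : PosD R t = ∅
  · refine ⟨[], ⟨⟨by simp, List.isChain_nil⟩, Or.inl ⟨rfl, hP⟩⟩, fun h => ?_⟩
    rw [hP] at h; exact absurd h (Set.notMem_empty _)
  · have hfin := posd_finite (R := R) t
    have hne : hfin.toFinset.Nonempty := by
      rw [Set.Finite.toFinset_nonempty]
      exact Set.nonempty_iff_ne_empty.mpr hP
    obtain ⟨π₁, hπ₁mem, hπ₁max⟩ := Finset.exists_max_image hfin.toFinset List.length hne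
    rw [Set.Finite.mem_toFinset] at hπ₁mem
    have hπ₁max' : ∀ π ∈ PosD R t, π.length ≤ π₁.length := by
      intro π hπ
      exact hπ₁max π (hfin.mem_toFinset.mpr hπ)
    obtain ⟨rest0, hrest0⟩ := reverse_inits_cons π₁
    set P : List ℕ → Prop := fun π => π ∈ PosD R t with hPdef
    set c : List (List ℕ) := (π₁.inits.reverse).filter (fun π => decide (P π)) with hc
    have hchead : c = π₁ :: rest0.filter (fun π => decide (P π)) := by
      rw [hc, hrest0, List.filter_cons_of_pos (by simp [hPdef, hπ₁mem])]
    have hmemc : ∀ π ∈ c, π ∈ PosD R t := by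
      intro π hπ
      have := List.of_mem_filter hπ
      simpa [hPdef] using this
    have hchain : c.Chain' PosGT := by
      apply List.Pairwise.isChain
      apply List.Pairwise.sublist List.filter_sublist
      rw [List.pairwise_reverse]
      exact (pairwise_inits π₁).imp (fun h => h)
    have hnogt : ∀ π ∈ PosD R t, ¬ PosGT π π₁ := by
      intro π hπ hgt
      have := posGT_length hgt
      have := hπ₁max' π hπ
      omega
    have hbelow : ∀ π ∈ PosD R t, PosGT π₁ π → π ∈ rest0.filter (fun π => decide (P π)) := by
      intro π hπ hgt
      obtain ⟨π', hne', happ⟩ := hgt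
      have hpref : π <+: π₁ := ⟨π', happ⟩
      have hmem : π ∈ π₁.inits.reverse := by
        rw [List.mem_reverse, List.mem_inits]
        exact hpref
      have hπne : π ≠ π₁ := by
        intro h
        subst h
        have := posGT_length ⟨π', hne', happ⟩
        omega
      have hmemf : π ∈ c := List.mem_filter.mpr ⟨hmem, by simp [hPdef, hπ]⟩
      rw [hchead] at hmemf
      rcases List.mem_cons.mp hmemf with h | h
      · exact absurd h hπne
      · exact h
    refine ⟨c, ⟨⟨hmemc, hchain⟩, Or.inr ⟨π₁, _, hchead, fun π hπ => ⟨hnogt π hπ, hbelow π hπ⟩⟩⟩, ?_⟩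
    intro hnil
    rcases eq_or_ne π₁ [] with rfl | hne
    · rw [hchead]; exact List.mem_cons_self
    · rw [hchead]
      exact List.mem_cons_of_mem _ (hbelow [] hnil (posGT_nil hne))

lemma forall₂_exists {α β : Type} {P : α → β → Prop} :
    ∀ c : List α, (∀ π ∈ c, ∃ b, P π b) → ∃ bs, List.Forall₂ P c bs := by
  intro c
  induction c with
  | nil => intro _; exact ⟨[], List.Forall₂.nil⟩
  | cons a l ih =>
    intro h
    obtain ⟨b, hb⟩ := h a List.mem_cons_self
    obtain ⟨bs, hbs⟩ := ih (fun x hx => h x (List.mem_cons_of_mem a hx))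
    exact ⟨b :: bs, List.Forall₂.cons hb hbs⟩

lemma forall₂_mem {α β : Type} {P : α → β → Prop} {c : List α} {bs : List β}
    (h : List.Forall₂ P c bs) {π : α} (hπ : π ∈ c) : ∃ b ∈ bs, P π b := by
  induction h with
  | nil => cases hπ
  | cons hab hrest ih =>
    rcases List.mem_cons.mp hπ with rfl | hmem
    · exact ⟨_, List.mem_cons_self, hab⟩
    · obtain ⟨b, hb, hPb⟩ := ih hmem
      exact ⟨b, List.mem_cons_of_mem _ hb, hPb⟩

/-! ### Finite branching and finiteness of Dh -/

lemma subst_rhs_det (hR : IsWfTRS R) {r : Rule σ V} (hr : r ∈ R)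
    {θ θ' : V → Term σ V} (h : Term.subst θ r.lhs = Term.subst θ' r.lhs) :
    Term.subst θ r.rhs = Term.subst θ' r.rhs := by
  apply subst_eq_of_varIn_eq
  intro x hx
  exact varIn_eq_of_subst_eq r.lhs θ θ' h x (hR.2.2 r hr x hx)

lemma innermost_succ_finite (hR : IsWfTRS R) (t : Term σ V) :
    {u | InnermostRewrite R t u}.Finite := by
  classical
  have hsub : {u | InnermostRewrite R t u} ⊆
      ⋃ π ∈ {π : List ℕ | ∃ v, t.subtermAt π = some v}, ⋃ r ∈ R,
        {u | ∃ θ : V → Term σ V, t.subtermAt π = some (Term.subst θ r.lhs) ∧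
          t.replaceAt π (Term.subst θ r.rhs) = some u} := by
    rintro u ⟨π, r, hr, θ, hm, _, hrep⟩
    exact Set.mem_biUnion ⟨_, hm⟩ (Set.mem_biUnion hr ⟨θ, hm, hrep⟩)
  apply Set.Finite.subset _ hsub
  apply Set.Finite.biUnion (positions_finite t)
  intro π _
  apply Set.Finite.biUnion hR.1
  intro r hr
  apply Set.Subsingleton.finite
  rintro u₁ ⟨θ₁, hm₁, hrep₁⟩ u₂ ⟨θ₂, hm₂, hrep₂⟩
  rw [hm₁] at hm₂
  have hlhs : Term.subst θ₂ r.lhs = Term.subst θ₁ r.lhs := by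
    injection hm₂ with h; exact h.symm
  have hrhs : Term.subst θ₁ r.rhs = Term.subst θ₂ r.rhs := subst_rhs_det hR hr hlhs.symm
  rw [hrhs, hrep₂] at hrep₁
  injection hrep₁ with h; exact h.symm

lemma forall₂_set_finite {Q : Term σ V → Term σ V → Prop} :
    ∀ l : List (Term σ V), (∀ s ∈ l, {u | Q s u}.Finite) →
    {l' : List (Term σ V) | List.Forall₂ Q l l'}.Finite := by
  intro l
  induction l with
  | nil =>
    intro _
    apply Set.Finite.subset (Set.finite_singleton ([] : List (Term σ V)))
    rintro l' hl'
    cases hl'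
    rfl
  | cons a l ih =>
    intro h
    have h1 := h a List.mem_cons_self
    have h2 := ih (fun s hs => h s (List.mem_cons_of_mem a hs))
    apply Set.Finite.subset (Set.Finite.image2 (fun u l' => u :: l') h1 h2)
    rintro l' hl'
    cases hl' with
    | cons hab hrest => exact Set.mem_image2_of_mem hab hrest

lemma pi_succ_finite (hR : IsWfTRS R) : ∀ t : Term σ V,
    {u | ParInnermost R t u}.Finite := by
  intro t
  induction t using term_size_induction with
  | h t ih =>
    cases t with
    | var x =>
      apply Set.Finite.subset (Set.finite_empty)
      intro u hu
      exact absurd hu (no_parinnermost_of_nf (var_nf hR x))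
    | fn f ts =>
      classical
      have hsub : {u | ParInnermost R (Term.fn f ts) u} ⊆
          {u | InnermostRewrite R (Term.fn f ts) u} ∪
          (Term.fn f) '' {l' | List.Forall₂ (fun s u => u = s ∨ ParInnermost R s u) ts l'} := by
        intro u hu
        cases hu with
        | redex _ _ hstep => exact Or.inl hstep
        | congr _ _ ts' htg hlen hzip =>
          refine Or.inr ⟨ts', ?_, rfl⟩
          apply List.forall₂_of_length_eq_of_get hlen
          intro j h₁ h₂
          simp only [List.get_eq_getElem]
          by_cases hc : ts[j] = ts'[j] ∧ NormalForm R ts[j]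
          · exact Or.inl hc.1.symm
          · refine Or.inr (hzip (ts[j], ts'[j]) ?_ hc)
            have hjz : j < (ts.zip ts').length := by rw [List.length_zip]; omega
            have := List.getElem_mem hjz
            rwa [List.getElem_zip] at this
      apply Set.Finite.subset _ hsub
      apply Set.Finite.union (innermost_succ_finite hR _)
      apply Set.Finite.image
      apply forall₂_set_finite
      intro s hs
      have : {u | u = s ∨ ParInnermost R s u} ⊆ {s} ∪ {u | ParInnermost R s u} := by
        intro u hu; exact hu.imp (fun h => h) (fun h => h)
      exact Set.Finite.subset (Set.Finite.union (Set.finite_singleton s)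
        (ih s (size_arg_lt hs))) this

lemma enat_bound_of_finite {S : Set ℕ∞} (h : S.Finite) (ht : ⊤ ∉ S) :
    ∃ M : ℕ, ∀ e ∈ S, e ≤ (M : ℕ∞) := by
  rcases S.eq_empty_or_nonempty with rfl | hne
  · exact ⟨0, fun e he => absurd he (Set.notMem_empty e)⟩
  · obtain ⟨a, haS, hamax⟩ := Set.Finite.exists_maximalFor id S h hne
    have hat : a ≠ ⊤ := fun hh => ht (hh ▸ haS)
    lift a to ℕ using hat
    refine ⟨a, fun e he => ?_⟩
    rcases le_total e a with hle | hge
    · exact hle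
    · exact hamax he hge

lemma Dh_ne_top_of_acc (hR : IsWfTRS R) {t : Term σ V}
    (hacc : Acc (fun x y => ParInnermost R y x) t) :
    Dh (ParInnermost R) t ≠ ⊤ := by
  induction hacc with
  | intro t hsucc ih =>
    have hfin : ((Dh (ParInnermost R)) '' {u | ParInnermost R t u}).Finite :=
      (pi_succ_finite hR t).image _
    have htop : ⊤ ∉ (Dh (ParInnermost R)) '' {u | ParInnermost R t u} := by
      rintro ⟨u, hu, hDu⟩
      exact ih u hu hDu
    obtain ⟨M, hM⟩ := enat_bound_of_finite hfin htop
    have hDh : Dh (ParInnermost R) t ≤ ((M + 1 : ℕ) : ℕ∞) := by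
      apply Dh_le_of_forall
      intro n t' hn
      cases n with
      | zero => simp
      | succ k =>
        obtain ⟨u, hu, hrest⟩ := hn
        have h1 : (k : ℕ∞) ≤ Dh (ParInnermost R) u := le_Dh_of_iter hrest
        have h2 : Dh (ParInnermost R) u ≤ (M : ℕ∞) := hM _ ⟨u, hu, rfl⟩
        have : (k : ℕ∞) ≤ (M : ℕ∞) := le_trans h1 h2
        have : k ≤ M := by exact_mod_cast this
        exact_mod_cast Nat.succ_le_succ this
    intro hc
    rw [hc] at hDh
    have h3 : ((M + 1 : ℕ) : ℕ∞) = ⊤ := top_le_iff.mp hDh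
    exact (ENat.coe_ne_top (M + 1)) h3

/-! ### Decomposing derivations -/

lemma argnf_of_inner_redex (hR : IsWfTRS R) {t : Term σ V}
    (h : IsInnermostRedex R t) : ArgNF R t := by
  obtain ⟨f, ts, rfl, _⟩ := redex_defined_root hR h.1
  exact Or.inr ⟨f, ts, rfl, nf_args_of_inner_redex h⟩

lemma nf_of_argnf_undefined (hR : IsWfTRS R) {f : σ} {ss : List (Term σ V)}
    (hanf : ArgNF R (Term.fn f ss)) (hd : ¬ Defined R f) :
    NormalForm R (Term.fn f ss) := by
  rcases hanf with ⟨x, hx⟩ | ⟨f', ts', heq, hnfargs⟩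
  · cases hx
  · injection heq with h1 h2
    subst h1; subst h2
    by_contra hnf
    have hin := not_nf_cases hR hnfargs hnf
    exact hd (hasDefinedRoot_fn_iff.mp (redex_defined_root hR hin.1))

lemma split_derivation (hR : IsWfTRS R) : ∀ (n : ℕ) (t t' : Term σ V),
    iterRel (ParInnermost R) n t t' →
    ∃ (m : ℕ) (u : Term σ V), m ≤ n ∧ iterRel (ParInnermostBelow R) m t u ∧
      ((m = n ∧ u = t') ∨
        (ArgNF R u ∧ ∃ v, iterRel (ParInnermost R) (n - m) u v)) := by
  intro n
  induction n with
  | zero =>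
    intro t t' h
    exact ⟨0, t, le_refl 0, rfl, Or.inl ⟨rfl, h⟩⟩
  | succ k ih =>
    intro t t' h
    by_cases hin : IsInnermostRedex R t
    · exact ⟨0, t, Nat.zero_le _, rfl,
        Or.inr ⟨argnf_of_inner_redex hR hin, t', by simpa using h⟩⟩
    · obtain ⟨w, hw, hrest⟩ := h
      obtain ⟨m, u, hmn, hiter, hcases⟩ := ih w t' hrest
      refine ⟨m + 1, u, Nat.succ_le_succ hmn, ⟨w, ⟨hw, hin⟩, hiter⟩, ?_⟩
      rcases hcases with ⟨rfl, rfl⟩ | ⟨hanf, v, hv⟩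
      · exact Or.inl ⟨rfl, rfl⟩
      · refine Or.inr ⟨hanf, v, ?_⟩
        have : k + 1 - (m + 1) = k - m := by omega
        rw [this]
        exact hv

lemma below_iter_shape : ∀ (m : ℕ) (f : σ) (ss : List (Term σ V)) (u : Term σ V),
    iterRel (ParInnermostBelow R) m (Term.fn f ss) u → ∃ ts, u = Term.fn f ts := by
  intro m
  induction m with
  | zero => intro f ss u h; cases h; exact ⟨ss, rfl⟩
  | succ k ih =>
    intro f ss u h
    obtain ⟨w, hw, hrest⟩ := h
    obtain ⟨ts1, rfl, _, _⟩ := congr_inversion hw.1 hw.2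
    exact ih f ts1 u hrest

lemma iter_first_step {α : Type} {r : α → α → Prop} {m : ℕ} {a w : α}
    (h : iterRel r m a w) (hm : 1 ≤ m) : ∃ b, r a b := by
  cases m with
  | zero => omega
  | succ k => obtain ⟨b, hb, _⟩ := h; exact ⟨b, hb⟩

lemma below_iter_project (hR : IsWfTRS R) : ∀ (m : ℕ) (f : σ) (ss : List (Term σ V))
    (u : Term σ V), iterRel (ParInnermostBelow R) m (Term.fn f ss) u → 1 ≤ m →
    ∃ (k : ℕ) (a : Term σ V), ss[k]? = some a ∧ ∃ w, iterRel (ParInnermost R) m a w := by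
  intro m
  induction m with
  | zero => intro _ _ _ _ h; omega
  | succ m ih =>
    intro f ss u h _
    obtain ⟨w, hw, hrest⟩ := h
    obtain ⟨ts, rfl, hlen, hpt⟩ := congr_inversion hw.1 hw.2
    rcases Nat.eq_zero_or_pos m with rfl | hmpos
    · -- single step: find a non-NF argument
      have hex : ∃ j : ℕ, ∃ hj : j < ss.length, ¬ NormalForm R ss[j] := by
        by_contra hc
        push_neg at hc
        have hall : ∀ v ∈ ss, NormalForm R v := by
          intro v hv
          obtain ⟨j, hj, rfl⟩ := List.mem_iff_getElem.mp hv
          exact hc j hj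
        by_cases hnf : NormalForm R (Term.fn f ss)
        · exact no_parinnermost_of_nf hnf hw.1
        · exact hw.2 (not_nf_cases hR hall hnf)
      obtain ⟨j, hj, hjnf⟩ := hex
      have hj' : j < ts.length := hlen ▸ hj
      rcases hpt j hj hj' with ⟨_, hnfj⟩ | hpi
      · exact absurd hnfj hjnf
      · exact ⟨j, ss[j], List.getElem?_eq_getElem hj, ts[j], ts[j], hpi, rfl⟩
    · obtain ⟨k, a, hka, w', hw'⟩ := ih f ts u hrest hmpos
      obtain ⟨hk, rfl⟩ := List.getElem?_eq_some_iff.mp hka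
      have hk' : k < ss.length := hlen ▸ hk
      rcases hpt k hk' hk with ⟨heq, hnfk⟩ | hpi
      · -- ss[k] = ts[k] is NF but does a step
        obtain ⟨w1, hw1⟩ := iter_first_step hw' hmpos
        rw [← heq] at hw1
        exact absurd hw1 (no_parinnermost_of_nf hnfk)
      · exact ⟨k, ss[k], List.getElem?_eq_getElem hk', w',
          ⟨ts[k], hpi, hw'⟩⟩

/-! ### Shifting chains -/

lemma posd_fn_cases {f : σ} {ts : List (Term σ V)} {π : List ℕ}
    (h : π ∈ PosD R (Term.fn f ts)) :
    (π = [] ∧ Defined R f) ∨ ∃ i ρ a, π = i :: ρ ∧ ts[i]? = some a ∧ ρ ∈ PosD R a := by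
  cases π with
  | nil => exact Or.inl ⟨rfl, hasDefinedRoot_fn_iff.mp (posd_nil_iff.mp h)⟩
  | cons i ρ =>
    obtain ⟨a, ha, hρ⟩ := posd_cons_iff.mp h
    exact Or.inr ⟨i, ρ, a, rfl, ha, hρ⟩

lemma posd_shift {f : σ} {ts : List (Term σ V)} {k : ℕ} {a : Term σ V} {π : List ℕ}
    (hk : ts[k]? = some a) (h : π ∈ PosD R a) : (k :: π) ∈ PosD R (Term.fn f ts) :=
  posd_cons_iff.mpr ⟨a, hk, h⟩

lemma posGT_cons_inv {i k : ℕ} {ρ π₁ : List ℕ} (h : PosGT (i :: ρ) (k :: π₁)) :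
    i = k ∧ PosGT ρ π₁ := by
  obtain ⟨π', hne, happ⟩ := h
  rw [List.cons_append] at happ
  injection happ with h1 h2
  exact ⟨h1.symm, π', hne, h2⟩

lemma chain'_shift {k : ℕ} {c : List (List ℕ)} (h : c.Chain' PosGT) :
    (c.map (k :: ·)).Chain' PosGT := by
  show List.IsChain _ _; rw [List.isChain_map]
  exact List.IsChain.imp (fun a b hab => posGT_cons_iff.mpr hab) h

lemma msdc_shift_core {f : σ} {ts : List (Term σ V)} {k : ℕ} {a : Term σ V}
    (hk : ts[k]? = some a) {π₁ : List ℕ} {rest : List (List ℕ)}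
    (hc : MSDC R a (π₁ :: rest)) (tail : List (List ℕ))
    (htail : (Defined R f → tail = [[]]) ∧ (¬ Defined R f → tail = [])) :
    MSDC R (Term.fn f ts) (((π₁ :: rest).map (k :: ·)) ++ tail) := by
  classical
  obtain ⟨⟨hmem, hchain⟩, hmax⟩ := hc
  have hmax' : ∀ π ∈ PosD R a, ¬ PosGT π π₁ ∧ (PosGT π₁ π → π ∈ rest) := by
    rcases hmax with ⟨habs, hP⟩ | ⟨π₁', rest', heq, h⟩
    · cases habs
    · injection heq with h1 h2
      subst h1; subst h2
      exact h
  constructor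
  · constructor
    · intro π hπ
      rcases List.mem_append.mp hπ with hπm | hπt
      · obtain ⟨ρ, hρ, rfl⟩ := List.mem_map.mp hπm
        exact posd_shift hk (hmem ρ hρ)
      · by_cases hd : Defined R f
        · rw [htail.1 hd] at hπt
          simp only [List.mem_singleton] at hπt
          subst hπt
          exact posd_nil_iff.mpr (hasDefinedRoot_fn_iff.mpr hd)
        · rw [htail.2 hd] at hπt; cases hπt
    · apply List.IsChain.append (chain'_shift hchain)
      · by_cases hd : Defined R f
        · rw [htail.1 hd]; exact List.isChain_singleton _
        · rw [htail.2 hd]; exact List.isChain_nil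
      · intro x hx y hy
        by_cases hd : Defined R f
        · rw [htail.1 hd] at hy
          simp only [List.head?_cons, Option.mem_some_iff] at hy
          subst hy
          have hxmem : x ∈ (π₁ :: rest).map (k :: ·) := by
            obtain ⟨hne, hxl⟩ := List.mem_getLast?_eq_getLast hx
            rw [hxl]; exact List.getLast_mem hne
          obtain ⟨ρ, _, rfl⟩ := List.mem_map.mp hxmem
          exact posGT_nil (by simp)
        · rw [htail.2 hd] at hy; simp at hy
  · refine Or.inr ⟨k :: π₁, (rest.map (k :: ·)) ++ tail, by simp, ?_⟩
    intro π hπ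
    constructor
    · intro hgt
      rcases posd_fn_cases hπ with ⟨rfl, _⟩ | ⟨i, ρ, b, rfl, hb, hρ⟩
      · exact not_posGT_nil hgt
      · obtain ⟨rfl, hgt'⟩ := posGT_cons_inv hgt
        rw [hk] at hb; injection hb with hb; subst hb
        exact (hmax' ρ hρ).1 hgt'
    · intro hgt
      rcases posd_fn_cases hπ with ⟨rfl, hdf⟩ | ⟨i, ρ, b, rfl, hb, hρ⟩
      · refine List.mem_append.mpr (Or.inr ?_)
        rw [htail.1 hdf]
        simp
      · obtain ⟨π', hne, happ⟩ := hgt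
        rw [List.cons_append] at happ
        injection happ with h1 h2
        subst h1
        rw [hk] at hb; injection hb with hb; subst hb
        have hgtρ : PosGT π₁ ρ := ⟨π', hne, h2⟩
        have hρrest := (hmax' ρ hρ).2 hgtρ
        exact List.mem_append.mpr (Or.inl (List.mem_map.mpr ⟨ρ, hρrest, rfl⟩))

/-! ### The bounding set -/

def BndSet (R : Set (Rule σ V)) (t : Term σ V) : Set ℕ∞ :=
  { d : ℕ∞ | ∃ c : List (List ℕ), MSDC R t c ∧
      ∃ bs : List (Term σ V),
        List.Forall₂ (fun π b => ∃ u, t.subtermAt π = some u ∧ MaxANF R u b) c bs ∧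
        d = (bs.map (Dh (ParInnermost R))).sum }

lemma enat_le_sum_mem : ∀ {l : List ℕ∞} {a : ℕ∞}, a ∈ l → a ≤ l.sum := by
  intro l
  induction l with
  | nil => intro a h; cases h
  | cons b l ih =>
    intro a h
    rw [List.sum_cons]
    rcases List.mem_cons.mp h with rfl | h'
    · exact le_self_add
    · exact le_trans (ih h') le_add_self

lemma bs_exists (hR : IsWfTRS R) {t : Term σ V} (htop : Dh (ParInnermost R) t ≠ ⊤)
    {c : List (List ℕ)} (hc : ∀ π ∈ c, π ∈ PosD R t) :
    ∃ bs, List.Forall₂ (fun π b => ∃ u, t.subtermAt π = some u ∧ MaxANF R u b) c bs := by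
  apply forall₂_exists
  intro π hπ
  obtain ⟨u, hu, _⟩ := hc π hπ
  have hut : Dh (ParInnermost R) u ≠ ⊤ := by
    intro hh
    exact htop (top_le_iff.mp (hh ▸ Dh_subterm_le hR π t u hu))
  obtain ⟨b, hb⟩ := maxanf_exists hR hut
  exact ⟨b, u, hu, hb⟩

lemma bndset_nonempty (hR : IsWfTRS R) {t : Term σ V}
    (htop : Dh (ParInnermost R) t ≠ ⊤) : (BndSet R t).Nonempty := by
  obtain ⟨c, hc, _⟩ := msdc_exists R t
  obtain ⟨bs, hbs⟩ := bs_exists hR htop hc.1.1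
  exact ⟨_, c, hc, bs, hbs, rfl⟩

lemma root_chain_bound (hR : IsWfTRS R) {t : Term σ V} (hd : HasDefinedRoot R t)
    (htop : Dh (ParInnermost R) t ≠ ⊤) {b₀ : Term σ V} (hb₀ : MaxANF R t b₀) :
    Dh (ParInnermost R) b₀ ≤ sSup (BndSet R t) := by
  classical
  obtain ⟨c, hc, hnil⟩ := msdc_exists R t
  have hnilc : ([] : List ℕ) ∈ c := hnil (posd_nil_iff.mpr hd)
  have hex : ∀ π ∈ c, ∃ b, (∃ u, t.subtermAt π = some u ∧ MaxANF R u b) ∧ (π = [] → b = b₀) := by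
    intro π hπ
    obtain ⟨u, hu, _⟩ := hc.1.1 π hπ
    rcases eq_or_ne π [] with rfl | hne
    · exact ⟨b₀, ⟨t, by rw [Term.subtermAt], hb₀⟩, fun _ => rfl⟩
    · have hut : Dh (ParInnermost R) u ≠ ⊤ := by
        intro hh
        exact htop (top_le_iff.mp (hh ▸ Dh_subterm_le hR π t u hu))
      obtain ⟨b, hb⟩ := maxanf_exists hR hut
      exact ⟨b, ⟨u, hu, hb⟩, fun h => absurd h hne⟩
  obtain ⟨bs, hbs'⟩ := forall₂_exists c hex
  have hbs : List.Forall₂ (fun π b => ∃ u, t.subtermAt π = some u ∧ MaxANF R u b) c bs :=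
    hbs'.imp (fun _ _ h => h.1)
  obtain ⟨b, hbmem, hPb⟩ := forall₂_mem hbs' hnilc
  have hbb : b = b₀ := hPb.2 rfl
  have hmemD : Dh (ParInnermost R) b₀ ∈ bs.map (Dh (ParInnermost R)) :=
    List.mem_map.mpr ⟨b, hbmem, by rw [hbb]⟩
  calc Dh (ParInnermost R) b₀ ≤ (bs.map (Dh (ParInnermost R))).sum := enat_le_sum_mem hmemD
  _ ≤ sSup (BndSet R t) := le_sSup ⟨c, hc, bs, hbs, rfl⟩

lemma shifted_elem (hR : IsWfTRS R) {f : σ} {ts : List (Term σ V)} {k : ℕ} {a : Term σ V}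
    (hk : ts[k]? = some a) {c : List (List ℕ)} {bs : List (Term σ V)} (hc : MSDC R a c)
    (hcne : c ≠ [])
    (hbs : List.Forall₂ (fun π b => ∃ u, a.subtermAt π = some u ∧ MaxANF R u b) c bs) :
    (¬ Defined R f → (bs.map (Dh (ParInnermost R))).sum ∈ BndSet R (Term.fn f ts)) ∧
    (∀ b₀, MaxANF R (Term.fn f ts) b₀ → Defined R f →
      ((bs.map (Dh (ParInnermost R))).sum + Dh (ParInnermost R) b₀) ∈ BndSet R (Term.fn f ts)) := by
  obtain ⟨π₁, rest, rfl⟩ : ∃ π₁ rest, c = π₁ :: rest := by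
    cases c with
    | nil => exact absurd rfl hcne
    | cons x l => exact ⟨x, l, rfl⟩
  have hbs' : List.Forall₂ (fun π b => ∃ u, (Term.fn f ts).subtermAt π = some u ∧ MaxANF R u b)
      ((π₁ :: rest).map (k :: ·)) bs := by
    rw [List.forall₂_map_left_iff]
    refine hbs.imp ?_
    rintro π b ⟨u, hu, hmax⟩
    exact ⟨u, by rw [subtermAt_fn hk]; exact hu, hmax⟩
  constructor
  · intro hnd
    have hmsdc := msdc_shift_core hk hc ([] : List (List ℕ))
      ⟨fun hd => absurd hd hnd, fun _ => rfl⟩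
    rw [List.append_nil] at hmsdc
    exact ⟨_, hmsdc, bs, hbs', rfl⟩
  · intro b₀ hb₀ hd
    have hmsdc := msdc_shift_core hk hc ([[]] : List (List ℕ))
      ⟨fun _ => rfl, fun h => absurd hd h⟩
    refine ⟨_, hmsdc, bs ++ [b₀], ?_, ?_⟩
    · refine List.rel_append hbs' ?_
      exact List.Forall₂.cons ⟨Term.fn f ts, by rw [Term.subtermAt], hb₀⟩ List.Forall₂.nil
    · simp

/-! ### Main bound -/

lemma main_bound (hR : IsWfTRS R) : ∀ t : Term σ V, Dh (ParInnermost R) t ≠ ⊤ →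
    ∀ (n : ℕ) (t' : Term σ V), iterRel (ParInnermost R) n t t' →
    (n : ℕ∞) ≤ sSup (BndSet R t) := by
  intro t
  induction t using term_size_induction with
  | h t ih =>
    intro htop n t' hiter
    rcases Nat.eq_zero_or_pos n with rfl | hnpos
    · simp
    cases t with
    | var x =>
      obtain ⟨w, hw⟩ := iter_first_step hiter hnpos
      exact absurd hw (no_parinnermost_of_nf (var_nf hR x))
    | fn f ss =>
      obtain ⟨m, u, hmn, hbelow, hcases⟩ := split_derivation hR n _ t' hiter
      rcases Nat.eq_zero_or_pos m with rfl | hmpos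
      · have hu : Term.fn f ss = u := hbelow
        subst hu
        rcases hcases with ⟨h0, _⟩ | ⟨hanf, v, hv⟩
        · omega
        · rw [Nat.sub_zero] at hv
          by_cases hd : Defined R f
          · obtain ⟨b₀, hb₀⟩ := maxanf_exists hR htop
            have h1 : (n : ℕ∞) ≤ Dh (ParInnermost R) (Term.fn f ss) := le_Dh_of_iter hv
            have h2 : Dh (ParInnermost R) (Term.fn f ss) ≤ Dh (ParInnermost R) b₀ :=
              hb₀.2.2 _ hanf Relation.ReflTransGen.refl
            have h3 := root_chain_bound hR (hasDefinedRoot_fn_iff.mpr hd) htop hb₀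
            exact le_trans h1 (le_trans h2 h3)
          · have hnf := nf_of_argnf_undefined hR hanf hd
            obtain ⟨w, hw⟩ := iter_first_step hv hnpos
            exact absurd hw (no_parinnermost_of_nf hnf)
      · obtain ⟨k, a, hka, w, hw⟩ := below_iter_project hR m f ss u hbelow hmpos
        obtain ⟨hk, rfl⟩ := List.getElem?_eq_some_iff.mp hka
        have hsub : (Term.fn f ss).subtermAt [k] = some ss[k] := by
          rw [subtermAt_fn hka, Term.subtermAt]
        have htopa : Dh (ParInnermost R) ss[k] ≠ ⊤ := fun hh =>
          htop (top_le_iff.mp (hh ▸ Dh_subterm_le hR [k] _ _ hsub))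
        have hBa : (m : ℕ∞) ≤ sSup (BndSet R ss[k]) :=
          ih ss[k] (size_arg_lt (List.getElem_mem hk)) htopa m w hw
        have hBane : (BndSet R ss[k]).Nonempty := bndset_nonempty hR htopa
        obtain ⟨d, hdmem, hdm⟩ := exists_ge_of_coe_le_sSup hBane hBa
        obtain ⟨c, hc, bs, hbs, rfl⟩ := hdmem
        have hcne : c ≠ [] := by
          rintro rfl
          cases hbs
          simp only [List.map_nil, List.sum_nil, le_zero_iff] at hdm
          have : m ≤ 0 := le_of_eq (by exact_mod_cast hdm)
          omega
        have helems := shifted_elem hR (f := f) hka hc hcne hbs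
        rcases hcases with ⟨rfl, rfl⟩ | ⟨hanf, v, hv⟩
        · by_cases hd : Defined R f
          · obtain ⟨b₀, hb₀⟩ := maxanf_exists hR htop
            have hmem := helems.2 b₀ hb₀ hd
            exact le_trans (le_trans hdm le_self_add) (le_sSup hmem)
          · exact le_trans hdm (le_sSup (helems.1 hd))
        · have hDu : ((n - m : ℕ) : ℕ∞) ≤ Dh (ParInnermost R) u := le_Dh_of_iter hv
          have hreach : Relation.ReflTransGen (ParInnermostBelow R) (Term.fn f ss) u :=
            rtg_iff_iter.mpr ⟨m, hbelow⟩
          by_cases hd : Defined R f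
          · obtain ⟨b₀, hb₀⟩ := maxanf_exists hR htop
            have hub : Dh (ParInnermost R) u ≤ Dh (ParInnermost R) b₀ := hb₀.2.2 u hanf hreach
            have hmem := helems.2 b₀ hb₀ hd
            have hsplit : (n : ℕ∞) = (m : ℕ∞) + ((n - m : ℕ) : ℕ∞) := by
              have : m + (n - m) = n := Nat.add_sub_cancel' hmn
              exact_mod_cast this.symm
            calc (n : ℕ∞) = (m : ℕ∞) + ((n - m : ℕ) : ℕ∞) := hsplit
            _ ≤ (bs.map (Dh (ParInnermost R))).sum + Dh (ParInnermost R) b₀ :=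
                add_le_add hdm (le_trans hDu hub)
            _ ≤ sSup (BndSet R (Term.fn f ss)) := le_sSup hmem
          · obtain ⟨ts', rfl⟩ := below_iter_shape m f ss u hbelow
            have hnf := nf_of_argnf_undefined hR hanf hd
            have hDu0 : Dh (ParInnermost R) (Term.fn f ts') = 0 :=
              Dh_eq_zero_of_no_step (fun w hw => no_parinnermost_of_nf hnf hw)
            have hnm0 : (n - m : ℕ) = 0 := by
              rw [hDu0] at hDu
              exact_mod_cast Nat.le_zero.mp (by exact_mod_cast hDu)
            have hnm : n ≤ m := by omega
            calc (n : ℕ∞) ≤ (m : ℕ∞) := by exact_mod_cast hnm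
            _ ≤ _ := le_trans hdm (le_sSup (helems.1 hd))

end Aux
/-- If all `⇉`-reductions of `t` are finite, then `Dh(t,⇉)` is at
most the maximum, over all maximal structural dependency chains `⟨π₁,…,πₖ⟩` of
`t`, of `Σᵢ Dh(⊥(t|πᵢ), ⇉)` with `⊥(t|πᵢ)` a maximal parallel argument normal
form of `t|πᵢ`. -/
theorem dh_le_max_sum_maxanf
    {σ V : Type} [Finite σ] (R : Set (Rule σ V)) (hR : IsWfTRS R)
    (t : Term σ V)
    (hfin : ¬ ∃ f : ℕ → Term σ V, f 0 = t ∧ ∀ i, ParInnermost R (f i) (f (i + 1))) :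
    Dh (ParInnermost R) t ≤
      sSup { d : ℕ∞ | ∃ c : List (List ℕ), MSDC R t c ∧
        ∃ bs : List (Term σ V),
          List.Forall₂ (fun π b => ∃ u, t.subtermAt π = some u ∧ MaxANF R u b) c bs ∧
          d = (bs.map (Dh (ParInnermost R))).sum } := by
  have hacc := acc_of_no_infinite_chain hfin
  have htop := Dh_ne_top_of_acc hR hacc
  show Dh (ParInnermost R) t ≤ sSup (BndSet R t)
  apply Dh_le_of_forall
  intro n t' h
  exact main_bound hR t htop n t' h

end ParallelComplexity
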